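/- arXiv:1303.5239 — 9 statements merged into one kernel-verified Lean document; each statement's English description precedes it below -/
import Mathlib

section
/- Let $G$ be an inverse semigroup acting by (semigroup) endomorphisms on the left of an inverse semigroup $A$, with action denoted $g \cdot \alpha$. Then the set $\{(\alpha, g) \in A \times G \mid (gg^{-1}) \cdot \alpha = \alpha\}$ is closed under the multiplication $(\alpha, g)(\beta, h) = (((gh)(gh)^{-1} \cdot \alpha) \circ (g \cdot \beta),\ gh)$, and this multiplication is associative. -/
/-- A semigroup is inverse if every element has a unique inverse. -/
def IsInverseSemigroup (S : Type*) [Semigroup S] : Prop :=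
  ∀ x : S, ∃! y : S, x * y * x = x ∧ y * x * y = y

/-- Multiplication of the λ-semidirect product of `G` acting on `A`. -/
def lamMul {A G : Type*} [Mul A] [Mul G] (act : G → A → A) (invG : G → G)
    (p q : A × G) : A × G :=
  (act ((p.2 * q.2) * invG (p.2 * q.2)) p.1 * act p.2 q.1, p.2 * q.2)

/-- Underlying set of the λ-semidirect product of `G` acting on `A`. -/
def lamSet {A G : Type*} [Mul G] (act : G → A → A) (invG : G → G) : Set (A × G) :=
  {p | act (p.2 * invG p.2) p.1 = p.1}

section Helpers

variable {G : Type*} [Semigroup G]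

private lemma lam_inv_unique (hG : IsInverseSemigroup G) {g y z : G}
    (hy1 : g*y*g = g) (hy2 : y*g*y = y) (hz1 : g*z*g = g) (hz2 : z*g*z = z) : y = z := by
  obtain ⟨w, _, hu⟩ := hG g
  rw [hu y ⟨hy1, hy2⟩, hu z ⟨hz1, hz2⟩]

/-- A product of idempotents is idempotent. -/
private lemma lam_idem_mul (hG : IsInverseSemigroup G) {e f : G}
    (he : e*e = e) (hf : f*f = f) : (e*f)*(e*f) = e*f := by
  obtain ⟨x, ⟨hx1, hx2⟩, _⟩ := hG (e*f)
  have hy1 : (e*f) * (f*x*e) * (e*f) = e*f := by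
    have h1 : (e*f) * (f*x*e) * (e*f) = e*(f*f)*x*((e*e)*f) := by
      simp only [mul_assoc]
    rw [h1, hf, he, hx1]
  have hy2 : (f*x*e) * (e*f) * (f*x*e) = f*x*e := by
    have h1 : (f*x*e) * (e*f) * (f*x*e) = f*(x*((e*e)*((f*f)*(x*e)))) := by
      simp only [mul_assoc]
    rw [h1, he, hf]
    have h2 : x*(e*(f*(x*e))) = (x*(e*f)*x)*e := by simp only [mul_assoc]
    rw [h2, hx2]
    simp only [mul_assoc]
  have hxy : f*x*e = x := lam_inv_unique hG hy1 hy2 hx1 hx2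
  have hxidem : x*x = x := by
    conv_lhs => rw [← hxy]
    have h3 : f*x*e*(f*x*e) = f*(x*(e*f)*x)*e := by simp only [mul_assoc]
    rw [h3, hx2, hxy]
  have hfin : e*f = x := by
    refine lam_inv_unique hG (g := x) hx2 hx1 ?_ ?_ <;> rw [hxidem, hxidem]
  rw [hfin, hxidem]

/-- Idempotents commute. -/
private lemma lam_idem_comm (hG : IsInverseSemigroup G) {e f : G}
    (he : e*e = e) (hf : f*f = f) : e*f = f*e := by
  have hef := lam_idem_mul hG he hf
  have hfe := lam_idem_mul hG hf he
  have hef3 : (e*f)*(e*f)*(e*f) = e*f := by rw [hef, hef]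
  refine (lam_inv_unique hG (g := e*f) ?_ ?_ hef3 hef3).symm
  · have h1 : (e*f)*(f*e)*(e*f) = e*(f*f)*((e*e)*f) := by simp only [mul_assoc]
    rw [h1, hf, he, hef]
  · have h1 : (f*e)*(e*f)*(f*e) = f*((e*e)*((f*f)*e)) := by simp only [mul_assoc]
    rw [h1, he, hf, ← mul_assoc]
    exact hfe

private lemma lam_gg'_idem (invG : G → G)
    (hinv : ∀ g : G, g * invG g * g = g ∧ invG g * g * invG g = invG g) (g : G) :
    (g*invG g)*(g*invG g) = g*invG g := by
  have h1 : (g*invG g)*(g*invG g) = g*(invG g*g*invG g) := by simp only [mul_assoc]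
  rw [h1, (hinv g).2]

private lemma lam_g'g_idem (invG : G → G)
    (hinv : ∀ g : G, g * invG g * g = g ∧ invG g * g * invG g = invG g) (g : G) :
    (invG g*g)*(invG g*g) = invG g*g := by
  have h1 : (invG g*g)*(invG g*g) = invG g*(g*invG g*g) := by simp only [mul_assoc]
  rw [h1, (hinv g).1]

/-- The inverse map is an anti-homomorphism. -/
private lemma lam_anti (hG : IsInverseSemigroup G) (invG : G → G)
    (hinv : ∀ g : G, g * invG g * g = g ∧ invG g * g * invG g = invG g) (g h : G) :
    invG (g*h) = invG h * invG g := by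
  have c : (h*invG h)*(invG g*g) = (invG g*g)*(h*invG h) :=
    lam_idem_comm hG (lam_gg'_idem invG hinv h) (lam_g'g_idem invG hinv g)
  refine (lam_inv_unique hG (g := g*h) ?_ ?_ ((hinv (g*h)).1) ((hinv (g*h)).2)).symm
  · calc (g*h)*(invG h*invG g)*(g*h) = g*((h*invG h)*(invG g*g))*h := by
          simp only [mul_assoc]
      _ = g*((invG g*g)*(h*invG h))*h := by rw [c]
      _ = (g*invG g*g)*(h*invG h*h) := by simp only [mul_assoc]
      _ = g*h := by rw [(hinv g).1, (hinv h).1]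
  · calc (invG h*invG g)*(g*h)*(invG h*invG g)
        = invG h*((invG g*g)*(h*invG h))*invG g := by simp only [mul_assoc]
      _ = invG h*((h*invG h)*(invG g*g))*invG g := by rw [c]
      _ = (invG h*h*invG h)*(invG g*g*invG g) := by simp only [mul_assoc]
      _ = invG h*invG g := by rw [(hinv h).2, (hinv g).2]

/-- Conjugate of an idempotent is idempotent. -/
private lemma lam_conj_idem (hG : IsInverseSemigroup G) (invG : G → G)
    (hinv : ∀ g : G, g * invG g * g = g ∧ invG g * g * invG g = invG g)
    {f : G} (hf : f*f = f) (s : G) :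
    (s*f*invG s)*(s*f*invG s) = s*f*invG s := by
  have c : f*(invG s*s) = (invG s*s)*f := lam_idem_comm hG hf (lam_g'g_idem invG hinv s)
  calc (s*f*invG s)*(s*f*invG s) = s*((f*(invG s*s))*(f*invG s)) := by simp only [mul_assoc]
    _ = s*(((invG s*s)*f)*(f*invG s)) := by rw [c]
    _ = (s*invG s*s)*((f*f)*invG s) := by simp only [mul_assoc]
    _ = s*f*invG s := by rw [(hinv s).1, hf, ← mul_assoc]

private lemma lam_absorb (hG : IsInverseSemigroup G) (invG : G → G)
    (hinv : ∀ g : G, g * invG g * g = g ∧ invG g * g * invG g = invG g)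
    {f : G} (hf : f*f = f) (g : G) :
    (g*f*invG g)*g = g*f := by
  have c : f*(invG g*g) = (invG g*g)*f := lam_idem_comm hG hf (lam_g'g_idem invG hinv g)
  calc (g*f*invG g)*g = g*(f*(invG g*g)) := by simp only [mul_assoc]
    _ = g*((invG g*g)*f) := by rw [c]
    _ = (g*invG g*g)*f := by simp only [mul_assoc]
    _ = g*f := by rw [(hinv g).1]

private lemma lam_conj_absorb (hG : IsInverseSemigroup G) (invG : G → G)
    (hinv : ∀ g : G, g * invG g * g = g ∧ invG g * g * invG g = invG g)
    {f : G} (hf : f*f = f) (s : G) :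
    (s*f*invG s)*(s*invG s) = s*f*invG s := by
  have c : f*(invG s*s) = (invG s*s)*f := lam_idem_comm hG hf (lam_g'g_idem invG hinv s)
  calc (s*f*invG s)*(s*invG s) = s*((f*(invG s*s))*invG s) := by simp only [mul_assoc]
    _ = s*(((invG s*s)*f)*invG s) := by rw [c]
    _ = (s*invG s*s)*(f*invG s) := by simp only [mul_assoc]
    _ = s*f*invG s := by rw [(hinv s).1, ← mul_assoc]

end Helpers

theorem lamSemidirect_closed_and_assoc {A G : Type*} [Semigroup A] [Semigroup G]
    (hA : IsInverseSemigroup A) (hG : IsInverseSemigroup G)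
    (invG : G → G)
    (hinvG : ∀ g : G, g * invG g * g = g ∧ invG g * g * invG g = invG g)
    (act : G → A → A)
    (hact_mul : ∀ (g : G) (a b : A), act g (a * b) = act g a * act g b)
    (hact_comp : ∀ (g h : G) (a : A), act (g * h) a = act g (act h a)) :
    (∀ p ∈ lamSet act invG, ∀ q ∈ lamSet act invG,
        lamMul act invG p q ∈ lamSet act invG) ∧
    (∀ p ∈ lamSet act invG, ∀ q ∈ lamSet act invG, ∀ r ∈ lamSet act invG,
        lamMul act invG (lamMul act invG p q) r
          = lamMul act invG p (lamMul act invG q r)) := by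
  constructor
  · rintro ⟨a, g⟩ hp ⟨b, h⟩ hq
    simp only [lamSet, lamMul, Set.mem_setOf_eq] at hp hq ⊢
    set e := g*h*invG (g*h) with he_def
    have he : e*e = e := lam_gg'_idem invG hinvG (g*h)
    have heg : e*g = g*(h*invG h) := by
      rw [he_def, lam_anti hG invG hinvG g h]
      calc (g*h)*(invG h*invG g)*g = (g*(h*invG h)*invG g)*g := by simp only [mul_assoc]
        _ = g*(h*invG h) := lam_absorb hG invG hinvG (lam_gg'_idem invG hinvG h) g
    rw [hact_mul, ← hact_comp, ← hact_comp, he, heg, hact_comp g (h*invG h), hq]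
  · rintro ⟨a, g⟩ hp ⟨b, h⟩ hq ⟨c, k⟩ hr
    simp only [lamSet, lamMul, Set.mem_setOf_eq] at hp hq hr ⊢
    refine Prod.ext ?_ (mul_assoc g h k)
    simp only
    set e := g*h*invG (g*h) with he_def
    set f := h*k*invG (h*k) with hf_def
    set E := g*h*k*invG (g*h*k) with hE_def
    have hanti_f : invG (h*k) = invG k * invG h := lam_anti hG invG hinvG h k
    have hE_alt : E = (g*h)*(k*invG k)*invG (g*h) := by
      rw [hE_def, lam_anti hG invG hinvG (g*h) k]
      simp only [mul_assoc]
    have hEe : E*e = E := by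
      rw [hE_alt, he_def]
      exact lam_conj_absorb hG invG hinvG (lam_gg'_idem invG hinvG k) (g*h)
    have hFidem : (h*(k*invG k)*invG h)*(h*(k*invG k)*invG h) = h*(k*invG k)*invG h :=
      lam_conj_idem hG invG hinvG (lam_gg'_idem invG hinvG k) h
    have hEg : E*g = g*f := by
      rw [hE_alt, lam_anti hG invG hinvG g h]
      have h1 : (g*h)*(k*invG k)*(invG h*invG g)*g = (g*(h*(k*invG k)*invG h)*invG g)*g := by
        simp only [mul_assoc]
      rw [h1, lam_absorb hG invG hinvG hFidem g, hf_def, hanti_f]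
      simp only [mul_assoc]
    have hE' : g*(h*k)*invG (g*(h*k)) = E := by rw [hE_def, ← mul_assoc]
    rw [hE', hact_mul, ← hact_comp E e, hEe, ← hact_comp E g, hEg,
      hact_comp g f, hact_comp g h, mul_assoc, ← hact_mul g]
end

section
/- The $\lambda$-semidirect product of an inverse semigroup $G$ acting by endomorphisms on an inverse semigroup $A$ is itself an inverse semigroup. -/
section
variable {S : Type*} [Semigroup S]

/-- product of idempotents is idempotent, in a semigroup with unique inverses -/
lemma sg_idem_mul (h : IsInverseSemigroup S) {e f : S} (he : e*e=e) (hf : f*f=f) :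
    (e*f)*(e*f) = e*f := by
  obtain ⟨x, ⟨hx1, hx2⟩, hux⟩ := h (e*f)
  have hfxe : f*x*e = x := by
    refine hux _ ⟨?_, ?_⟩
    · calc (e*f)*(f*x*e)*(e*f) = e*((f*f)*(x*((e*e)*f))) := by simp [mul_assoc]
        _ = e*(f*(x*(e*f))) := by rw [he, hf]
        _ = e*f := by simpa [mul_assoc] using hx1
    · calc (f*x*e)*(e*f)*(f*x*e) = f*((x*((e*e)*((f*f)*x)))*e) := by simp [mul_assoc]
        _ = f*((x*(e*(f*x)))*e) := by rw [he, hf]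
        _ = f*(x*e) := by rw [show x*(e*(f*x)) = x from by simpa [mul_assoc] using hx2]
        _ = f*x*e := by rw [mul_assoc]
  have hxx : x*x = x := by
    have h1 : x*x = f*(x*(e*f)*x)*e := by
      conv_lhs => rw [← hfxe]
      simp [mul_assoc]
    rw [h1, hx2, hfxe]
  have hefx : e*f = x := (h x).unique ⟨hx2, hx1⟩ ⟨by rw [hxx, hxx], by rw [hxx, hxx]⟩
  rw [hefx, hxx]

/-- idempotents commute in a semigroup with unique inverses -/
lemma sg_idem_comm (h : IsInverseSemigroup S) {e f : S} (he : e*e=e) (hf : f*f=f) :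
    e*f = f*e := by
  have hef := sg_idem_mul h he hf
  have hfe := sg_idem_mul h hf he
  obtain ⟨x, hx, hux⟩ := h (e*f)
  have h1 : e*f = x := hux _ ⟨by rw [hef, hef], by rw [hef, hef]⟩
  have h2 : f*e = x := by
    refine hux _ ⟨?_, ?_⟩
    · calc (e*f)*(f*e)*(e*f) = e*((f*f)*((e*e)*f)) := by simp [mul_assoc]
        _ = e*(f*(e*f)) := by rw [he, hf]
        _ = (e*f)*(e*f) := by simp [mul_assoc]
        _ = e*f := hef
    · calc (f*e)*(e*f)*(f*e) = f*((e*e)*((f*f)*e)) := by simp [mul_assoc]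
        _ = f*(e*(f*e)) := by rw [he, hf]
        _ = (f*e)*(f*e) := by simp [mul_assoc]
        _ = f*e := hfe
  rw [h1, h2]

/-- uniqueness of inverses from commuting idempotents -/
lemma sg_unique_of_comm (hcomm : ∀ e f : S, e*e=e → f*f=f → e*f=f*e)
    {x y z : S} (hy1 : x*y*x=x) (hy2 : y*x*y=y) (hz1 : x*z*x=x) (hz2 : z*x*z=z) :
    y = z := by
  have iyx : (y*x)*(y*x) = y*x := by
    have h1 : (y*x)*(y*x) = y*(x*y*x) := by simp [mul_assoc]
    rw [h1, hy1]
  have izx : (z*x)*(z*x) = z*x := by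
    have h1 : (z*x)*(z*x) = z*(x*z*x) := by simp [mul_assoc]
    rw [h1, hz1]
  have ixy : (x*y)*(x*y) = x*y := by
    have h1 : (x*y)*(x*y) = (x*y*x)*y := by simp [mul_assoc]
    rw [h1, hy1]
  have ixz : (x*z)*(x*z) = x*z := by
    have h1 : (x*z)*(x*z) = (x*z*x)*z := by simp [mul_assoc]
    rw [h1, hz1]
  have c1 : y = z*x*y := by
    calc y = y*x*y := hy2.symm
      _ = y*((x*z*x)*y) := by rw [hz1, ← mul_assoc]
      _ = ((y*x)*(z*x))*y := by simp [mul_assoc]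
      _ = ((z*x)*(y*x))*y := by rw [hcomm _ _ iyx izx]
      _ = z*((x*y*x)*y) := by simp [mul_assoc]
      _ = z*(x*y) := by rw [hy1]
      _ = z*x*y := by rw [mul_assoc]
  have c2 : z = z*x*y := by
    calc z = z*x*z := hz2.symm
      _ = z*((x*y*x)*z) := by rw [hy1, ← mul_assoc]
      _ = z*((x*y)*(x*z)) := by simp [mul_assoc]
      _ = z*((x*z)*(x*y)) := by rw [hcomm _ _ ixy ixz]
      _ = (z*x*z)*(x*y) := by simp [mul_assoc]
      _ = z*(x*y) := by rw [hz2]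
      _ = z*x*y := by rw [mul_assoc]
  exact c1.trans c2.symm
end

section
variable {G : Type*} [Semigroup G] {invG : G → G}

lemma sg_idem_right (hinvG : ∀ g : G, g * invG g * g = g ∧ invG g * g * invG g = invG g)
    (g : G) : (g*invG g)*(g*invG g) = g*invG g := by
  calc (g*invG g)*(g*invG g) = (g*invG g*g)*invG g := by simp [mul_assoc]
    _ = g*invG g := by rw [(hinvG g).1]

lemma sg_idem_left (hinvG : ∀ g : G, g * invG g * g = g ∧ invG g * g * invG g = invG g)
    (g : G) : (invG g*g)*(invG g*g) = invG g*g := by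
  calc (invG g*g)*(invG g*g) = (invG g*g*invG g)*g := by simp [mul_assoc]
    _ = invG g*g := by rw [(hinvG g).2]

lemma sg_inv_unique (hG : IsInverseSemigroup G)
    (hinvG : ∀ g : G, g * invG g * g = g ∧ invG g * g * invG g = invG g)
    {g y : G} (h1 : g*y*g = g) (h2 : y*g*y = y) : y = invG g := by
  obtain ⟨x, hx, hux⟩ := hG g
  exact (hux y ⟨h1, h2⟩).trans (hux _ ⟨(hinvG g).1, (hinvG g).2⟩).symm

lemma sg_inv_inv (hG : IsInverseSemigroup G)
    (hinvG : ∀ g : G, g * invG g * g = g ∧ invG g * g * invG g = invG g)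
    (g : G) : invG (invG g) = g :=
  (sg_inv_unique hG hinvG (hinvG g).2 (hinvG g).1).symm

lemma sg_inv_idem (hG : IsInverseSemigroup G)
    (hinvG : ∀ g : G, g * invG g * g = g ∧ invG g * g * invG g = invG g)
    {e : G} (he : e*e = e) : invG e = e :=
  (sg_inv_unique hG hinvG (by rw [he, he]) (by rw [he, he])).symm

lemma sg_inv_mul (hG : IsInverseSemigroup G)
    (hinvG : ∀ g : G, g * invG g * g = g ∧ invG g * g * invG g = invG g)
    (g h : G) : invG (g*h) = invG h * invG g := by
  have c : (h*invG h)*(invG g*g) = (invG g*g)*(h*invG h) :=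
    sg_idem_comm hG (sg_idem_right hinvG h) (sg_idem_left hinvG g)
  refine (sg_inv_unique hG hinvG ?_ ?_).symm
  · calc g*h*(invG h*invG g)*(g*h) = g*((h*invG h)*((invG g*g)*h)) := by simp [mul_assoc]
      _ = g*(((h*invG h)*(invG g*g))*h) := by rw [← mul_assoc (h*invG h) (invG g*g) h]
      _ = g*(((invG g*g)*(h*invG h))*h) := by rw [c]
      _ = (g*invG g*g)*(h*invG h*h) := by simp [mul_assoc]
      _ = g*h := by rw [(hinvG g).1, (hinvG h).1]
  · calc (invG h*invG g)*(g*h)*(invG h*invG g)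
        = invG h*(((invG g*g)*(h*invG h))*invG g) := by simp [mul_assoc]
      _ = invG h*(((h*invG h)*(invG g*g))*invG g) := by rw [c]
      _ = (invG h*h*invG h)*(invG g*g*invG g) := by simp [mul_assoc]
      _ = invG h*invG g := by rw [(hinvG g).2, (hinvG h).2]
end

theorem lamSemidirect_isInverse {A G : Type*} [Semigroup A] [Semigroup G]
    (hA : IsInverseSemigroup A) (hG : IsInverseSemigroup G)
    (invG : G → G)
    (hinvG : ∀ g : G, g * invG g * g = g ∧ invG g * g * invG g = invG g)
    (act : G → A → A)
    (hact_mul : ∀ (g : G) (a b : A), act g (a * b) = act g a * act g b)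
    (hact_comp : ∀ (g h : G) (a : A), act (g * h) a = act g (act h a)) :
    (∀ p ∈ lamSet act invG, ∀ q ∈ lamSet act invG,
        lamMul act invG p q ∈ lamSet act invG) ∧
    (∀ p ∈ lamSet act invG, ∀ q ∈ lamSet act invG, ∀ r ∈ lamSet act invG,
        lamMul act invG (lamMul act invG p q) r
          = lamMul act invG p (lamMul act invG q r)) ∧
    (∀ p ∈ lamSet act invG, ∃! q, q ∈ lamSet act invG ∧
        lamMul act invG (lamMul act invG p q) p = p ∧
        lamMul act invG (lamMul act invG q p) q = q) := by
  classical
  -- inverse map on A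
  set invA : A → A := fun a => (hA a).choose with hinvA_def
  have hinvA : ∀ a : A, a * invA a * a = a ∧ invA a * a * invA a = invA a :=
    fun a => (hA a).choose_spec.1
  have uA : ∀ {a y : A}, a*y*a = a → y*a*y = y → y = invA a :=
    fun {a y} h1 h2 => (hA a).choose_spec.2 y ⟨h1, h2⟩
  have act_invA : ∀ (g : G) (a : A), act g (invA a) = invA (act g a) := by
    intro g a
    refine uA ?_ ?_
    · rw [← hact_mul, ← hact_mul, (hinvA a).1]
    · rw [← hact_mul, ← hact_mul, (hinvA a).2]
  -- closure
  have hclosed : ∀ p ∈ lamSet act invG, ∀ q ∈ lamSet act invG,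
      lamMul act invG p q ∈ lamSet act invG := by
    rintro ⟨a, g⟩ hp ⟨b, h⟩ hq
    simp only [lamSet, Set.mem_setOf_eq] at hp hq ⊢
    simp only [lamMul]
    have uq : ∀ X : G, g*(h*(invG (g*h)*(g*(h*X)))) = g*(h*X) := by
      intro X
      have h0 := congrArg (· * X) (hinvG (g*h)).1
      simpa [mul_assoc] using h0
    have keyG : (g*h*invG (g*h))*g*(h*invG h) = g*(h*invG h) := by
      simp only [mul_assoc]
      rw [uq]
    have key : act (g*h*invG (g*h)*g) b = act g b := by
      calc act (g*h*invG (g*h)*g) b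
          = act (g*h*invG (g*h)*g) (act (h*invG h) b) := by rw [hq]
        _ = act ((g*h*invG (g*h)*g)*(h*invG h)) b := (hact_comp _ _ _).symm
        _ = act (g*(h*invG h)) b := by rw [keyG]
        _ = act g (act (h*invG h) b) := hact_comp _ _ _
        _ = act g b := by rw [hq]
    simp only [hact_mul]
    simp only [← hact_comp]
    rw [sg_idem_right hinvG (g*h), key]
  -- associativity
  have hassoc : ∀ p ∈ lamSet act invG, ∀ q ∈ lamSet act invG, ∀ r ∈ lamSet act invG,
      lamMul act invG (lamMul act invG p q) r
        = lamMul act invG p (lamMul act invG q r) := by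
    rintro ⟨a, g⟩ hp ⟨b, h⟩ hq ⟨c, k⟩ hr
    simp only [lamSet, Set.mem_setOf_eq] at hp hq hr
    simp only [lamMul]
    rw [← mul_assoc g h k]
    have uq : ∀ X : G, g*(h*(invG (g*h)*(g*(h*X)))) = g*(h*X) := by
      intro X
      have h0 := congrArg (· * X) (hinvG (g*h)).1
      simpa [mul_assoc] using h0
    have cq : ∀ X : G, k*(invG k*(invG (g*h)*(g*(h*X))))
        = invG (g*h)*(g*(h*(k*(invG k*X)))) := by
      intro X
      have c : (k*invG k)*((invG (g*h))*(g*h)) = ((invG (g*h))*(g*h))*(k*invG k) :=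
        sg_idem_comm hG (sg_idem_right hinvG k) (sg_idem_left hinvG (g*h))
      have h0 := congrArg (· * X) c
      simpa [mul_assoc] using h0
    have hb2 : invG h*(h*invG h) = invG h := by
      simpa [mul_assoc] using (hinvG h).2
    have hE : g*h*k*invG (g*h*k) * (g*h*invG (g*h)) = g*h*k*invG (g*h*k) := by
      rw [sg_inv_mul hG hinvG (g*h) k]
      simp only [mul_assoc]
      rw [cq, uq]
    have e2 : (g*h*k*invG (g*h*k) * g) * (h*invG h) = (g*(h*k*invG (h*k))) * (h*invG h) := by
      rw [sg_inv_mul hG hinvG (g*h) k, sg_inv_mul hG hinvG h k]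
      simp only [mul_assoc]
      rw [cq, uq, hb2]
    have key2 : act (g*h*k*invG (g*h*k) * g) b = act (g*(h*k*invG (h*k))) b := by
      calc act (g*h*k*invG (g*h*k) * g) b
          = act (g*h*k*invG (g*h*k) * g) (act (h*invG h) b) := by rw [hq]
        _ = act ((g*h*k*invG (g*h*k) * g)*(h*invG h)) b := (hact_comp _ _ _).symm
        _ = act ((g*(h*k*invG (h*k)))*(h*invG h)) b := by rw [e2]
        _ = act (g*(h*k*invG (h*k))) (act (h*invG h) b) := hact_comp _ _ _
        _ = act (g*(h*k*invG (h*k))) b := by rw [hq]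
    simp only [hact_mul]
    simp only [← hact_comp]
    rw [hE, key2, mul_assoc]
  refine ⟨hclosed, hassoc, ?_⟩
  letI : Semigroup {p : A × G // p ∈ lamSet act invG} :=
    { mul := fun p q => ⟨lamMul act invG p.1 q.1, hclosed _ p.2 _ q.2⟩,
      mul_assoc := fun p q r => Subtype.ext (hassoc _ p.2 _ q.2 _ r.2) }
  have mul_val : ∀ x y : {p : A × G // p ∈ lamSet act invG},
      (x * y).1 = lamMul act invG x.1 y.1 := fun _ _ => rfl
  -- idempotents of the product commute
  have hcommT : ∀ e f : {p : A × G // p ∈ lamSet act invG},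
      e*e = e → f*f = f → e*f = f*e := by
    rintro ⟨⟨a, g⟩, ha⟩ ⟨⟨b, h⟩, hb⟩ he hf
    simp only [lamSet, Set.mem_setOf_eq] at ha hb
    rw [Subtype.ext_iff, mul_val] at he hf
    simp only [lamMul, Prod.mk.injEq] at he hf
    obtain ⟨he1, he2⟩ := he
    obtain ⟨hf1, hf2⟩ := hf
    have hig : invG g = g := sg_inv_idem hG hinvG he2
    have hih : invG h = h := sg_inv_idem hG hinvG hf2
    rw [hig, he2] at ha
    rw [hih, hf2] at hb
    rw [he2, hig, he2, ha] at he1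
    rw [hf2, hih, hf2, hb] at hf1
    -- he1 : a*a = a, hf1 : b*b = b, ha : act g a = a, hb : act h b = b
    have hgh : (g*h)*(g*h) = g*h := sg_idem_mul hG he2 hf2
    have hhg : (h*g)*(h*g) = h*g := sg_idem_mul hG hf2 he2
    rw [Subtype.ext_iff, mul_val, mul_val]
    simp only [lamMul, Prod.mk.injEq]
    refine ⟨?_, sg_idem_comm hG he2 hf2⟩
    have rhs_eq : act (h*g*invG (h*g)) b * act h a = act (h*g) (b*a) := by
      rw [sg_inv_idem hG hinvG hhg, hhg, hact_mul, hact_comp h g a, ha]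
    have lhs_eq : act (g*h*invG (g*h)) a * act g b = act (g*h) (a*b) := by
      rw [sg_inv_idem hG hinvG hgh, hgh, hact_mul, hact_comp g h b, hb]
    calc act (g*h*invG (g*h)) a * act g b
        = act (g*h) (a*b) := lhs_eq
      _ = act (h*g) (b*a) := by rw [sg_idem_comm hA he1 hf1, sg_idem_comm hG he2 hf2]
      _ = act (h*g*invG (h*g)) b * act h a := rhs_eq.symm
  -- regularity
  have hregT : ∀ x : {p : A × G // p ∈ lamSet act invG},
      ∃ y, x*y*x = x ∧ y*x*y = y := by
    rintro ⟨⟨a, g⟩, ha⟩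
    simp only [lamSet, Set.mem_setOf_eq] at ha
    have hg1 := (hinvG g).1
    have hg2 := (hinvG g).2
    have hinv2 : invG (invG g) = g := sg_inv_inv hG hinvG g
    have higig : invG (g*invG g) = g*invG g :=
      sg_inv_idem hG hinvG (sg_idem_right hinvG g)
    have higg2 : invG (invG g*g) = invG g*g :=
      sg_inv_idem hG hinvG (sg_idem_left hinvG g)
    have hval : act (g*invG g) (invA a) = invA a := by
      rw [act_invA, ha]
    refine ⟨⟨(act (invG g) (invA a), invG g), ?_⟩, ?_, ?_⟩
    · simp only [lamSet, Set.mem_setOf_eq]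
      rw [hinv2, ← hact_comp, hg2]
    · apply Subtype.ext
      rw [mul_val, mul_val]
      simp only [lamMul, Prod.mk.injEq]
      constructor
      · rw [hg1, higig, sg_idem_right hinvG g, ha, ← hact_comp, hval, hact_mul, ha,
          hval, (hinvA a).1]
      · exact hg1
    · apply Subtype.ext
      rw [mul_val, mul_val]
      simp only [lamMul, Prod.mk.injEq]
      constructor
      · rw [hg2, hinv2, higg2, sg_idem_left hinvG g, ← hact_comp, hg2, hact_mul,
          ← hact_comp, ← hact_comp, hg2, ← hact_mul, ← hact_mul, (hinvA a).2]
      · exact hg2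
  have hT : IsInverseSemigroup {p : A × G // p ∈ lamSet act invG} := by
    intro x
    obtain ⟨y, h1, h2⟩ := hregT x
    exact ⟨y, ⟨h1, h2⟩, fun z hz => sg_unique_of_comm hcommT hz.1 hz.2 h1 h2⟩
  intro p hp
  obtain ⟨y, ⟨h1, h2⟩, hu⟩ := hT ⟨p, hp⟩
  refine ⟨y.1, ⟨y.2, congrArg Subtype.val h1, congrArg Subtype.val h2⟩, ?_⟩
  rintro q ⟨hq, hq1, hq2⟩
  exact congrArg Subtype.val (hu ⟨q, hq⟩ ⟨Subtype.ext hq1, Subtype.ext hq2⟩)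
end

section
/- Any $\lambda$-semidirect product of a finite inverse semigroup $G$ acting by endomorphisms on a locally finite inverse semigroup $A$ is locally finite. -/
theorem lamSemidirect_locallyFinite {A G : Type*} [Semigroup A] [Semigroup G]
    [Finite G]
    (hA : IsInverseSemigroup A) (hG : IsInverseSemigroup G)
    (invG : G → G)
    (hinvG : ∀ g : G, g * invG g * g = g ∧ invG g * g * invG g = invG g)
    (act : G → A → A)
    (hact_mul : ∀ (g : G) (a b : A), act g (a * b) = act g a * act g b)
    (hact_comp : ∀ (g h : G) (a : A), act (g * h) a = act g (act h a))
    (hAlf : ∀ U : Set A, U.Finite → (Subsemigroup.closure U : Set A).Finite) :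
    ∀ Y : Set (A × G), Y.Finite → Y ⊆ lamSet act invG →
      Set.Finite {x : A × G | ∀ T : Set (A × G), Y ⊆ T → T ⊆ lamSet act invG →
        (∀ p ∈ T, ∀ q ∈ T, lamMul act invG p q ∈ T) → x ∈ T} := by
  intro Y hYfin hYsub
  -- idempotency of g * invG g
  have hidem : ∀ g : G, (g * invG g) * (g * invG g) = g * invG g := by
    intro g
    calc (g * invG g) * (g * invG g) = g * (invG g * g * invG g) := by
          simp [mul_assoc]
      _ = g * invG g := by rw [(hinvG g).2]
  -- the finite generating set for the A-part
  set U : Set A := (fun q : G × (A × G) => act q.1 q.2.1) '' (Set.univ ×ˢ Y) with hU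
  have hUfin : U.Finite := (Set.finite_univ.prod hYfin).image _
  have hCfin : (Subsemigroup.closure U : Set A).Finite := hAlf U hUfin
  set C : Set A := (Subsemigroup.closure U : Set A) with hC
  have hUC : U ⊆ C := Subsemigroup.subset_closure
  have hactU : ∀ g : G, ∀ a ∈ U, act g a ∈ U := by
    rintro g a ⟨⟨h, p⟩, ⟨-, hpY⟩, rfl⟩
    refine ⟨(g * h, p), ⟨Set.mem_univ _, hpY⟩, ?_⟩
    show act (g * h) p.1 = act g (act h p.1)
    exact hact_comp g h p.1
  have hactC : ∀ g : G, ∀ a ∈ C, act g a ∈ C := by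
    intro g a ha
    induction ha using Subsemigroup.closure_induction with
    | mem x hx => exact hUC (hactU g x hx)
    | mul x y _ _ hx hy => rw [hact_mul]; exact mul_mem hx hy
  -- the finite closed set
  set T : Set (A × G) := {p | p ∈ lamSet act invG ∧ p.1 ∈ C} with hT
  have hTfin : T.Finite := by
    apply Set.Finite.subset (hCfin.prod Set.finite_univ)
    rintro ⟨a, g⟩ ⟨-, ha⟩
    exact ⟨ha, Set.mem_univ _⟩
  have hYT : Y ⊆ T := by
    intro p hp
    refine ⟨hYsub hp, hUC ?_⟩
    refine ⟨(p.2 * invG p.2, p), ⟨Set.mem_univ _, hp⟩, ?_⟩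
    show act (p.2 * invG p.2) p.1 = p.1
    exact hYsub hp
  have hTsub : T ⊆ lamSet act invG := fun p hp => hp.1
  have hTclosed : ∀ p ∈ T, ∀ q ∈ T, lamMul act invG p q ∈ T := by
    rintro ⟨a, g⟩ ⟨hpS, hpC⟩ ⟨b, h⟩ ⟨hqS, hqC⟩
    have hpS' : act (g * invG g) a = a := hpS
    have hqS' : act (h * invG h) b = b := hqS
    set r := g * h with hr
    set e := r * invG r with he
    constructor
    · -- membership in lamSet
      show act ((r) * invG (r)) (act e a * act g b) = act e a * act g b
      rw [← he, hact_mul]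
      congr 1
      · rw [← hact_comp, hidem]
      · rw [← hact_comp]
        conv_rhs => rw [← hqS']
        rw [← hact_comp]
        conv_lhs => rw [← hqS']
        rw [← hact_comp]
        congr 1
        have h1 : e * g * h = r := by
          rw [he, hr]
          calc g * h * invG (g * h) * g * h = g * h * invG (g * h) * (g * h) := by
                rw [mul_assoc]
            _ = g * h := (hinvG (g * h)).1
        calc e * g * (h * invG h) = e * g * h * invG h := by simp [mul_assoc]
          _ = r * invG h := by rw [h1]
          _ = g * (h * invG h) := by rw [hr, mul_assoc]
    · -- first component in C
      exact mul_mem (hactC e a hpC) (hactC g b hqC)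
  -- conclude
  apply hTfin.subset
  intro x hx
  exact hx T hYT hTsub hTclosed
end

section
/- Let $G$ be a finite inverse semigroup acting by endomorphisms on a locally finite inverse semigroup $A$, and let $\sigma : \mathbb{N} \to \mathbb{N}$ be a non-decreasing function such that every $k$-generated subsemigroup of $A$ has cardinality at most $\sigma(k)$. Then every $m$-generated subsemigroup of the $\lambda$-semidirect product of $G$ acting on $A$ has cardinality at most $|G| \cdot \sigma(m|G|)$. -/
lemma ncard_prod_aux {α β : Type*} (s : Set α) (t : Set β) :
    (s ×ˢ t).ncard = s.ncard * t.ncard := by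
  rw [← Nat.card_coe_set_eq, ← Nat.card_coe_set_eq, ← Nat.card_coe_set_eq,
    Nat.card_congr (Equiv.Set.prod s t), Nat.card_prod]

theorem lamSemidirect_card_bound {A G : Type*} [Semigroup A] [Semigroup G]
    [Finite G]
    (hA : IsInverseSemigroup A) (hG : IsInverseSemigroup G)
    (invG : G → G)
    (hinvG : ∀ g : G, g * invG g * g = g ∧ invG g * g * invG g = invG g)
    (act : G → A → A)
    (hact_mul : ∀ (g : G) (a b : A), act g (a * b) = act g a * act g b)
    (hact_comp : ∀ (g h : G) (a : A), act (g * h) a = act g (act h a))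
    (hAlf : ∀ U : Set A, U.Finite → (Subsemigroup.closure U : Set A).Finite)
    (σ : ℕ → ℕ) (hσ : Monotone σ)
    (hbound : ∀ (k : ℕ) (U : Set A), U.Finite → U.ncard ≤ k →
      (Subsemigroup.closure U : Set A).ncard ≤ σ k) :
    ∀ (m : ℕ) (Y : Set (A × G)), Y.Finite → Y.ncard ≤ m → Y ⊆ lamSet act invG →
      Set.Finite {x : A × G | ∀ T : Set (A × G), Y ⊆ T → T ⊆ lamSet act invG →
          (∀ p ∈ T, ∀ q ∈ T, lamMul act invG p q ∈ T) → x ∈ T} ∧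
      Set.ncard {x : A × G | ∀ T : Set (A × G), Y ⊆ T → T ⊆ lamSet act invG →
          (∀ p ∈ T, ∀ q ∈ T, lamMul act invG p q ∈ T) → x ∈ T}
        ≤ Nat.card G * σ (m * Nat.card G) := by
  intro m Y hYfin hYcard hYsub
  classical
  set S : Set (A × G) := {x : A × G | ∀ T : Set (A × G), Y ⊆ T → T ⊆ lamSet act invG →
      (∀ p ∈ T, ∀ q ∈ T, lamMul act invG p q ∈ T) → x ∈ T} with hSdef
  -- the generating set of first coordinates, moved around by the action
  set U : Set A := (fun z : (A × G) × G => act z.2 z.1.1) '' (Y ×ˢ (Set.univ : Set G))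
    with hUdef
  have hUfin : U.Finite := (hYfin.prod Set.finite_univ).image _
  have hUcard : U.ncard ≤ m * Nat.card G := by
    calc U.ncard ≤ (Y ×ˢ (Set.univ : Set G)).ncard :=
            Set.ncard_image_le (hYfin.prod Set.finite_univ)
      _ = Y.ncard * Nat.card G := by rw [ncard_prod_aux, Set.ncard_univ]
      _ ≤ m * Nat.card G := Nat.mul_le_mul_right _ hYcard
  -- U is invariant under the action
  have hUinv : ∀ (h : G) (a : A), a ∈ U → act h a ∈ U := by
    rintro h a ⟨⟨z, h'⟩, ⟨hz, -⟩, rfl⟩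
    exact ⟨(z, h * h'), ⟨hz, trivial⟩, by dsimp only; exact hact_comp h h' z.1⟩
  -- hence so is its closure
  have hWinv : ∀ (h : G) (a : A), a ∈ Subsemigroup.closure U →
      act h a ∈ Subsemigroup.closure U := by
    intro h a ha
    induction ha using Subsemigroup.closure_induction with
    | mem x hx => exact Subsemigroup.subset_closure (hUinv h x hx)
    | mul x y hx hy ihx ihy =>
        rw [hact_mul]
        exact Subsemigroup.mul_mem _ ihx ihy
  -- lamSet is closed under lamMul
  have hlamclosed : ∀ p ∈ lamSet act invG, ∀ q ∈ lamSet act invG,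
      lamMul act invG p q ∈ lamSet act invG := by
    rintro ⟨α, g⟩ hp ⟨β, h⟩ hq
    simp only [lamSet, Set.mem_setOf_eq] at hp hq ⊢
    simp only [lamMul]
    have he : ((g * h) * invG (g * h)) * ((g * h) * invG (g * h))
        = (g * h) * invG (g * h) := by
      have h1 := (hinvG (g * h)).1
      calc ((g * h) * invG (g * h)) * ((g * h) * invG (g * h))
          = ((g * h) * invG (g * h) * (g * h)) * invG (g * h) := by
            simp only [mul_assoc]
        _ = (g * h) * invG (g * h) := by rw [h1]
    have h2 : act (((g * h) * invG (g * h)) * g) β = act g β := by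
      conv_lhs => rw [← hq, ← hact_comp]
      have heq : (((g * h) * invG (g * h)) * g) * (h * invG h)
          = g * (h * invG h) := by
        have h1 := (hinvG (g * h)).1
        calc (((g * h) * invG (g * h)) * g) * (h * invG h)
            = ((g * h) * invG (g * h) * (g * h)) * invG h := by
              simp only [mul_assoc]
          _ = (g * h) * invG h := by rw [h1]
          _ = g * (h * invG h) := by rw [mul_assoc]
      rw [heq, hact_comp, hq]
    rw [hact_mul, ← hact_comp, ← hact_comp, he, h2]
  -- basic properties of S
  have hSclosed : ∀ p ∈ S, ∀ q ∈ S, lamMul act invG p q ∈ S := by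
    intro p hp q hq T hYT hTsub hTcl
    exact hTcl p (hp T hYT hTsub hTcl) q (hq T hYT hTsub hTcl)
  -- the key bounding set
  set T₀ : Set (A × G) :=
    {p : A × G | p.1 ∈ Subsemigroup.closure U ∧ p ∈ lamSet act invG} with hT₀def
  have hYT₀ : Y ⊆ T₀ := by
    rintro ⟨α, g⟩ hy
    refine ⟨Subsemigroup.subset_closure ?_, hYsub hy⟩
    exact ⟨((α, g), g * invG g), ⟨hy, trivial⟩, hYsub hy⟩
  have hT₀sub : T₀ ⊆ lamSet act invG := fun p hp => hp.2
  have hT₀cl : ∀ p ∈ T₀, ∀ q ∈ T₀, lamMul act invG p q ∈ T₀ := by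
    rintro ⟨α, g⟩ ⟨hα, hpl⟩ ⟨β, h⟩ ⟨hβ, hql⟩
    refine ⟨?_, hlamclosed _ hpl _ hql⟩
    exact Subsemigroup.mul_mem _ (hWinv _ _ hα) (hWinv _ _ hβ)
  have hST₀ : S ⊆ T₀ := fun x hx => hx T₀ hYT₀ hT₀sub hT₀cl
  -- finish
  have hWfin : (Subsemigroup.closure U : Set A).Finite := hAlf U hUfin
  have hsub : S ⊆ (Subsemigroup.closure U : Set A) ×ˢ (Set.univ : Set G) :=
    fun x hx => ⟨(hST₀ hx).1, trivial⟩
  have hprodfin : ((Subsemigroup.closure U : Set A) ×ˢ (Set.univ : Set G)).Finite :=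
    hWfin.prod Set.finite_univ
  refine ⟨hprodfin.subset hsub, ?_⟩
  calc S.ncard ≤ ((Subsemigroup.closure U : Set A) ×ˢ (Set.univ : Set G)).ncard :=
        Set.ncard_le_ncard hsub hprodfin
    _ = (Subsemigroup.closure U : Set A).ncard * Nat.card G := by
        rw [ncard_prod_aux, Set.ncard_univ]
    _ ≤ σ (m * Nat.card G) * Nat.card G :=
        Nat.mul_le_mul_right _ (hbound _ U hUfin hUcard)
    _ = Nat.card G * σ (m * Nat.card G) := Nat.mul_comm _ _
end

section
/- A $k$-generated inverse semigroup that admits a surjective idempotent-pure morphism onto a finite inverse semigroup of cardinality $n$ has cardinality at most $n(2^{kn} - 1)$. -/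
namespace InvSgAux

variable {I : Type*} [Semigroup I]

/-- action form of an equation : append w and right-associate -/
lemma act {x z : I} (h : x = z) (w : I) : x * w = z * w := by rw [h]

noncomputable def iv (hI : IsInverseSemigroup I) (a : I) : I := (hI a).exists.choose

lemma sp1 (hI : IsInverseSemigroup I) (a : I) : a * iv hI a * a = a :=
  (hI a).exists.choose_spec.1
lemma sp2 (hI : IsInverseSemigroup I) (a : I) : iv hI a * a * iv hI a = iv hI a :=
  (hI a).exists.choose_spec.2

lemma iv_unique (hI : IsInverseSemigroup I) {a y : I}
    (h1 : a * y * a = a) (h2 : y * a * y = y) : y = iv hI a :=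
  (hI a).unique ⟨h1, h2⟩ ⟨sp1 hI a, sp2 hI a⟩

lemma iv_idem (hI : IsInverseSemigroup I) {e : I} (he : IsIdempotentElem e) : iv hI e = e :=
  (iv_unique hI (by rw [he.eq, he.eq]) (by rw [he.eq, he.eq])).symm

lemma iv_iv (hI : IsInverseSemigroup I) (a : I) : iv hI (iv hI a) = a :=
  (iv_unique hI (sp2 hI a) (sp1 hI a)).symm

lemma idem_mul (hI : IsInverseSemigroup I) {e f : I}
    (he : IsIdempotentElem e) (hf : IsIdempotentElem f) :
    IsIdempotentElem (e * f) := by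
  have hew : ∀ w : I, e * (e * w) = e * w := fun w => by
    simpa only [mul_assoc] using act he.eq w
  have hfw : ∀ w : I, f * (f * w) = f * w := fun w => by
    simpa only [mul_assoc] using act hf.eq w
  have hx1 := sp1 hI (e * f)
  have hx2 := sp2 hI (e * f)
  set x := iv hI (e * f) with hxdef
  have hx1w : ∀ w : I, e * (f * (x * (e * (f * w)))) = e * (f * w) := fun w => by
    simpa only [mul_assoc] using act hx1 w
  have hx2w : ∀ w : I, x * (e * (f * (x * w))) = x * w := fun w => by
    simpa only [mul_assoc] using act hx2 w
  have key1 : e * f * (f * x * e) * (e * f) = e * f := by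
    simp only [mul_assoc]
    rw [hfw, hew]
    simpa only [mul_assoc] using hx1
  have key2 : f * x * e * (e * f) * (f * x * e) = f * x * e := by
    simp only [mul_assoc]
    rw [hew, hfw, hx2w]
  have hxe : f * x * e = x := iv_unique hI key1 key2
  have hxid : IsIdempotentElem x := by
    show x * x = x
    have h1 : x * x = f * x * e * (f * x * e) := by rw [hxe]
    have h2 : f * x * e * (f * x * e) = f * x * e := by
      simp only [mul_assoc]
      rw [show x * (e * (f * (x * e))) = x * e from hx2w e]
    rw [h1, h2, hxe]
  have hef : e * f = iv hI x :=
    iv_unique hI (a := x) (by rw [hx2]) (by rw [hx1])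
  rw [hef, iv_idem hI hxid]
  exact hxid

lemma idem_comm (hI : IsInverseSemigroup I) {e f : I}
    (he : IsIdempotentElem e) (hf : IsIdempotentElem f) :
    e * f = f * e := by
  have hef := idem_mul hI he hf
  have hfe := idem_mul hI hf he
  have hew : ∀ w : I, e * (e * w) = e * w := fun w => by
    simpa only [mul_assoc] using act he.eq w
  have hfw : ∀ w : I, f * (f * w) = f * w := fun w => by
    simpa only [mul_assoc] using act hf.eq w
  have hefw : ∀ w : I, e * (f * (e * (f * w))) = e * (f * w) := fun w => by
    simpa only [mul_assoc] using act hef.eq w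
  have hfew : ∀ w : I, f * (e * (f * (e * w))) = f * (e * w) := fun w => by
    simpa only [mul_assoc] using act hfe.eq w
  have h1 : e * f * (f * e) * (e * f) = e * f := by
    simp only [mul_assoc]
    rw [hfw, hew]
    simpa only [mul_assoc] using hef.eq
  have h2 : f * e * (e * f) * (f * e) = f * e := by
    simp only [mul_assoc]
    rw [hew, hfw]
    simpa only [mul_assoc] using hfe.eq
  have : f * e = iv hI (e * f) := iv_unique hI h1 h2
  rw [this, iv_idem hI hef]

lemma D_idem (hI : IsInverseSemigroup I) (a : I) : IsIdempotentElem (a * iv hI a) := by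
  show _ = _
  simp only [mul_assoc]
  have := act (sp1 hI a) (iv hI a)
  simpa only [mul_assoc] using this

lemma D'_idem (hI : IsInverseSemigroup I) (a : I) : IsIdempotentElem (iv hI a * a) := by
  show _ = _
  simp only [mul_assoc]
  have := act (sp2 hI a) a
  simpa only [mul_assoc] using this

lemma iv_mul (hI : IsInverseSemigroup I) (a b : I) : iv hI (a * b) = iv hI b * iv hI a := by
  have e1 := D_idem hI b      -- b * iv b idem
  have e2 := D'_idem hI a     -- iv a * a idem
  have ha1 : ∀ w : I, a * (iv hI a * (a * w)) = a * w := fun w => by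
    simpa only [mul_assoc] using act (sp1 hI a) w
  have hb1 : ∀ w : I, b * (iv hI b * (b * w)) = b * w := fun w => by
    simpa only [mul_assoc] using act (sp1 hI b) w
  have ha2 : ∀ w : I, iv hI a * (a * (iv hI a * w)) = iv hI a * w := fun w => by
    simpa only [mul_assoc] using act (sp2 hI a) w
  have hb2 : ∀ w : I, iv hI b * (b * (iv hI b * w)) = iv hI b * w := fun w => by
    simpa only [mul_assoc] using act (sp2 hI b) w
  have hcomm : ∀ w : I, b * (iv hI b * (iv hI a * (a * w))) = iv hI a * (a * (b * (iv hI b * w))) :=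
    fun w => by
      simpa only [mul_assoc] using act (idem_comm hI e1 e2) w
  have h1 : a * b * (iv hI b * iv hI a) * (a * b) = a * b := by
    simp only [mul_assoc]
    rw [hcomm, show b * (iv hI b * b) = b from by simpa only [mul_assoc] using sp1 hI b, ha1]
  have h2 : iv hI b * iv hI a * (a * b) * (iv hI b * iv hI a) = iv hI b * iv hI a := by
    simp only [mul_assoc]
    have hcomm' : ∀ w : I, iv hI a * (a * (b * (iv hI b * w))) = b * (iv hI b * (iv hI a * (a * w))) :=
      fun w => by simpa only [mul_assoc] using act (idem_comm hI e2 e1) w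
    rw [hcomm', hb2, show iv hI a * (a * iv hI a) = iv hI a from by
      simpa only [mul_assoc] using sp2 hI a]
  exact (iv_unique hI h1 h2).symm

end InvSgAux

namespace InvSgAux

section Pure

variable {I J : Type*} [Semigroup I] [Semigroup J]
variable (hI : IsInverseSemigroup I) (ρ : I →ₙ* J)
variable (hpure : ∀ a e : I, IsIdempotentElem e → ρ a = ρ e → IsIdempotentElem a)

include hI in
lemma efe {e f : I} (he : IsIdempotentElem e) (hf : IsIdempotentElem f) :
    e * (f * e) = f * e := by
  rw [← mul_assoc, idem_comm hI he hf, mul_assoc, he.eq]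

include hI in
lemma lemW {f u : I} (hf : IsIdempotentElem f) :
    (f * u) * iv hI (f * u) = (u * iv hI u) * f := by
  rw [iv_mul hI, iv_idem hI hf]
  calc (f * u) * (iv hI u * f) = f * ((u * iv hI u) * f) := by simp only [mul_assoc]
  _ = (u * iv hI u) * f := efe hI hf (D_idem hI u)

include hI hpure in
lemma base {c u : I} (hshape : c * (iv hI u * u) = c) (hρ : ρ c = ρ u) :
    (c * iv hI c) * (u * iv hI u) = c * iv hI c := by
  have hY : IsIdempotentElem (c * iv hI u) :=
    hpure _ (u * iv hI u) (D_idem hI u) (by rw [map_mul, hρ, ← map_mul])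
  have e1 : (c * iv hI u) * iv hI (c * iv hI u) = c * iv hI c := by
    rw [iv_mul hI, iv_iv hI]
    calc (c * iv hI u) * (u * iv hI c) = (c * (iv hI u * u)) * iv hI c := by
          simp only [mul_assoc]
    _ = c * iv hI c := by rw [hshape]
  have hcic : c * iv hI c = c * iv hI u := by
    rw [← e1, iv_idem hI hY, hY.eq]
  rw [hcic]
  calc (c * iv hI u) * (u * iv hI u) = c * (iv hI u * u * iv hI u) := by simp only [mul_assoc]
  _ = c * iv hI u := by rw [sp2 hI u]

include hI hpure in
lemma lemA {c u f : I} (hf : IsIdempotentElem f) (hshape : c * (iv hI u * u) = c)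
    (hρ : ρ c = ρ (f * u)) :
    ((c * iv hI c) * f) * ((f * u) * iv hI (f * u)) = (c * iv hI c) * f := by
  have hρf : ρ f * ρ f = ρ f := by rw [← map_mul, hf.eq]
  have hY : IsIdempotentElem (f * (c * iv hI u)) := by
    refine hpure _ (f * (u * iv hI u)) (idem_mul hI hf (D_idem hI u)) ?_
    have h1 : ρ (f * (c * iv hI u)) = ρ f * ρ f * (ρ u * ρ (iv hI u)) := by
      simp only [map_mul, hρ, mul_assoc]
    rw [h1, hρf]
    simp only [map_mul, mul_assoc]
  have e2 : (f * (c * iv hI u)) * iv hI (f * (c * iv hI u)) = (c * iv hI c) * f := by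
    rw [iv_mul hI, iv_mul hI, iv_iv hI, iv_idem hI hf]
    calc (f * (c * iv hI u)) * (u * iv hI c * f)
        = f * ((c * (iv hI u * u)) * (iv hI c * f)) := by simp only [mul_assoc]
    _ = f * ((c * iv hI c) * f) := by rw [hshape, mul_assoc]
    _ = (c * iv hI c) * f := efe hI hf (D_idem hI c)
  have estar : (c * iv hI c) * f = f * (c * iv hI u) := by
    rw [← e2, iv_idem hI hY, hY.eq]
  have G1 : ((c * iv hI c) * f) * (u * iv hI u) = (c * iv hI c) * f := by
    rw [estar]
    calc (f * (c * iv hI u)) * (u * iv hI u)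
        = f * (c * (iv hI u * u * iv hI u)) := by simp only [mul_assoc]
    _ = f * (c * iv hI u) := by rw [sp2 hI u]
  rw [lemW hI hf, ← mul_assoc, G1, mul_assoc, hf.eq]

include hI hpure in
lemma step {c u q X : I} (hX : IsIdempotentElem X) (hshape : c * (iv hI u * u) = c)
    (hρ : ρ c = ρ (q * u)) (h1 : X * (c * iv hI c) = X) (h2 : X * (q * iv hI q) = X) :
    X * ((q * u) * iv hI (q * u)) = X := by
  have hfq : IsIdempotentElem (iv hI q * q) := D'_idem hI q
  have ht_shape : (iv hI q * c) * (iv hI u * u) = iv hI q * c := by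
    rw [mul_assoc, hshape]
  have hρt : ρ (iv hI q * c) = ρ ((iv hI q * q) * u) := by
    rw [map_mul, hρ, ← map_mul, ← mul_assoc]
  have A1 := lemA hI ρ hpure hfq ht_shape hρt
  set t := iv hI q * c with htdef
  have hivt : iv hI t = iv hI c * q := by rw [htdef, iv_mul hI, iv_iv hI]
  have A2 : (t * iv hI t) * (iv hI q * q) = t * iv hI t := by
    rw [hivt, htdef]
    calc (iv hI q * c * (iv hI c * q)) * (iv hI q * q)
        = iv hI q * (c * (iv hI c * (q * iv hI q * q))) := by simp only [mul_assoc]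
    _ = iv hI q * (c * (iv hI c * q)) := by rw [sp1 hI q]
    _ = iv hI q * c * (iv hI c * q) := by simp only [mul_assoc]
  have A3 : (t * iv hI t) * ((iv hI q * q * u) * iv hI (iv hI q * q * u)) = t * iv hI t := by
    calc (t * iv hI t) * ((iv hI q * q * u) * iv hI (iv hI q * q * u))
        = ((t * iv hI t) * (iv hI q * q)) * ((iv hI q * q * u) * iv hI (iv hI q * q * u)) := by
          rw [A2]
    _ = (t * iv hI t) * (iv hI q * q) := A1
    _ = t * iv hI t := A2
  -- conjugate by q
  have A4 : q * (t * iv hI t) * iv hI q = (c * iv hI c) * (q * iv hI q) := by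
    rw [htdef, hivt]
    calc q * (iv hI q * c * (iv hI c * q)) * iv hI q
        = (q * iv hI q) * ((c * iv hI c) * (q * iv hI q)) := by simp only [mul_assoc]
    _ = (c * iv hI c) * (q * iv hI q) := efe hI (D_idem hI q) (D_idem hI c)
  have A5 : q * ((iv hI q * q * u) * iv hI (iv hI q * q * u)) * iv hI q
      = (q * u) * iv hI (q * u) := by
    rw [lemW hI hfq, iv_mul hI]
    calc q * ((u * iv hI u) * (iv hI q * q)) * iv hI q
        = q * (u * (iv hI u * (iv hI q * (q * iv hI q)))) := by simp only [mul_assoc]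
    _ = q * (u * (iv hI u * iv hI q)) := by
          rw [show iv hI q * (q * iv hI q) = iv hI q from by simpa only [mul_assoc] using sp2 hI q]
    _ = (q * u) * (iv hI u * iv hI q) := by simp only [mul_assoc]
  have A6 : ((c * iv hI c) * (q * iv hI q)) * ((q * u) * iv hI (q * u))
      = (c * iv hI c) * (q * iv hI q) := by
    rw [← A4, ← A5]
    calc (q * (t * iv hI t) * iv hI q) * (q * ((iv hI q * q * u) * iv hI (iv hI q * q * u)) * iv hI q)
        = q * (((t * iv hI t) * (iv hI q * q)) * ((iv hI q * q * u) * iv hI (iv hI q * q * u))) * iv hI q := by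
          simp only [mul_assoc]
    _ = q * ((t * iv hI t) * ((iv hI q * q * u) * iv hI (iv hI q * q * u))) * iv hI q := by rw [A2]
    _ = q * (t * iv hI t) * iv hI q := by rw [A3]
  calc X * ((q * u) * iv hI (q * u))
      = ((X * (c * iv hI c)) * (q * iv hI q)) * ((q * u) * iv hI (q * u)) := by rw [h1, h2]
  _ = X * (((c * iv hI c) * (q * iv hI q)) * ((q * u) * iv hI (q * u))) := by simp only [mul_assoc]
  _ = X * ((c * iv hI c) * (q * iv hI q)) := by rw [A6]
  _ = X := by rw [← mul_assoc, h1, h2]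

end Pure

end InvSgAux

namespace InvSgAux

section Words

variable {I J : Type*} [Semigroup I] [Semigroup J]

def evalF (q : I) (l : List I) : I := l.foldl (· * ·) q

lemma evalF_cons (q x : I) (l : List I) : evalF q (x :: l) = evalF (q * x) l := rfl

lemma evalF_hom : ∀ (l : List I) (q h : I), evalF (q * h) l = q * evalF h l
  | [], _, _ => rfl
  | x :: xs, q, h => by
    rw [evalF_cons, evalF_cons, mul_assoc, evalF_hom xs q (h * x)]

lemma evalF_append (q : I) (l₁ l₂ : List I) : evalF q (l₁ ++ l₂) = evalF (evalF q l₁) l₂ :=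
  List.foldl_append

lemma evalF_decomp : ∀ (l : List I) (q : I), evalF q l = q ∨ ∃ r, evalF q l = q * r
  | [], _ => Or.inl rfl
  | x :: xs, q => by
    rcases evalF_decomp xs (q * x) with h | ⟨r, h⟩
    · exact Or.inr ⟨x, h⟩
    · exact Or.inr ⟨x * r, by rw [evalF_cons, h, mul_assoc]⟩

variable (hI : IsInverseSemigroup I)

def edgL (ρ : I →ₙ* J) {U : Set I} : I → List ↥U → List (↥U × J)
  | _, [] => []
  | q, u :: l => (u, ρ (q * ↑u)) :: edgL ρ (q * ↑u) l

def fullE (ρ : I →ₙ* J) {U : Set I} (h : ↥U) (t : List ↥U) : List (↥U × J) :=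
  (h, ρ ↑h) :: edgL ρ (↑h) t

def Cov (ρ : I →ₙ* J) (X : I) (u : I) (s : J) : Prop :=
  ∃ c : I, c * (iv hI u * u) = c ∧ ρ c = s ∧ X * (c * iv hI c) = X

lemma Lpre (a x r : I) (h : a = x * r) :
    (a * iv hI a) * (x * iv hI x) = a * iv hI a := by
  have hiva : iv hI a = iv hI r * iv hI x := by rw [h, iv_mul hI]
  rw [hiva, h]
  calc (x * r) * (iv hI r * iv hI x) * (x * iv hI x)
      = x * ((r * iv hI r) * (iv hI x * (x * iv hI x))) := by simp only [mul_assoc]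
  _ = x * ((r * iv hI r) * iv hI x) := by
      rw [show iv hI x * (x * iv hI x) = iv hI x from by simpa only [mul_assoc] using sp2 hI x]
  _ = (x * r) * (iv hI r * iv hI x) := by simp only [mul_assoc]

lemma covPrefix (a c : I) (hpre : a = c ∨ ∃ r, a = c * r) :
    (a * iv hI a) * (c * iv hI c) = a * iv hI a := by
  rcases hpre with rfl | ⟨r, hr⟩
  · exact (D_idem hI a).eq
  · exact Lpre hI a c r hr

lemma covList (ρ : I →ₙ* J) {U : Set I} (a : I) :
    ∀ (l : List ↥U) (q : I), a = evalF q (l.map Subtype.val) →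
      ∀ u s, (u, s) ∈ edgL ρ q l → Cov hI ρ (a * iv hI a) (↑u) s
  | [], _, _, u, s, hmem => by simp [edgL] at hmem
  | x :: xs, q, ha, u, s, hmem => by
    rw [List.map_cons, evalF_cons] at ha
    rcases List.mem_cons.mp hmem with h | h
    · obtain ⟨h1, h2⟩ := Prod.mk.injEq .. ▸ h
      subst h2
      refine ⟨q * ↑x, ?_, ?_, ?_⟩
      · rw [show (↑u : I) = ↑x from by rw [h1]]
        calc q * ↑x * (iv hI ↑x * ↑x) = q * (↑x * (iv hI ↑x * ↑x)) := by simp only [mul_assoc]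
        _ = q * ↑x := by rw [show (↑x : I) * (iv hI ↑x * ↑x) = ↑x from by
              simpa only [mul_assoc] using sp1 hI (↑x : I)]
      · rfl
      · exact covPrefix hI a (q * ↑x) (by
          rcases evalF_decomp (xs.map Subtype.val) (q * ↑x) with hd | ⟨r, hd⟩
          · exact Or.inl (ha.trans hd)
          · exact Or.inr ⟨r, ha.trans hd⟩)
    · exact covList ρ a xs (q * ↑x) ha u s h

lemma covFull (ρ : I →ₙ* J) {U : Set I} (a : I) (h : ↥U) (t : List ↥U)
    (ha : a = evalF (↑h) (t.map Subtype.val)) :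
    ∀ u s, (u, s) ∈ fullE ρ h t → Cov hI ρ (a * iv hI a) (↑u) s := by
  intro u s hmem
  rcases List.mem_cons.mp hmem with hh | hh
  · obtain ⟨h1, h2⟩ := Prod.mk.injEq .. ▸ hh
    subst h2
    refine ⟨↑h, ?_, ?_, ?_⟩
    · rw [show (↑u : I) = ↑h from by rw [h1]]
      simpa only [mul_assoc] using sp1 hI (↑h : I)
    · rfl
    · exact covPrefix hI a (↑h) (evalF_decomp (t.map Subtype.val) ↑h |>.imp (ha.trans ·)
        (fun ⟨r, hr⟩ => ⟨r, ha.trans hr⟩))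
  · exact covList hI ρ a t (↑h) ha u s hh

end Words

section Chain

variable {I J : Type*} [Semigroup I] [Semigroup J]
variable (hI : IsInverseSemigroup I) (ρ : I →ₙ* J)
variable (hpure : ∀ a e : I, IsIdempotentElem e → ρ a = ρ e → IsIdempotentElem a)

include hpure in
lemma start {X u : I} (hcov : Cov hI ρ X u (ρ u)) : X * (u * iv hI u) = X := by
  obtain ⟨c, hsh, hρc, hXc⟩ := hcov
  have hb := base hI ρ hpure hsh hρc
  calc X * (u * iv hI u) = (X * (c * iv hI c)) * (u * iv hI u) := by rw [hXc]
  _ = X * ((c * iv hI c) * (u * iv hI u)) := by simp only [mul_assoc]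
  _ = X * (c * iv hI c) := by rw [hb]
  _ = X := hXc

include hpure in
lemma chain {U : Set I} {X : I} (hX : IsIdempotentElem X) :
    ∀ (l : List ↥U) (q : I), X * (q * iv hI q) = X →
      (∀ u s, (u, s) ∈ edgL ρ q l → Cov hI ρ X (↑u) s) →
      X * (evalF q (l.map Subtype.val) * iv hI (evalF q (l.map Subtype.val))) = X
  | [], _, hq, _ => hq
  | x :: xs, q, hq, hcov => by
    obtain ⟨c, hsh, hρc, hXc⟩ := hcov x (ρ (q * ↑x)) List.mem_cons_self
    have hnext : X * ((q * ↑x) * iv hI (q * ↑x)) = X :=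
      step hI ρ hpure hX hsh hρc hXc hq
    rw [List.map_cons, evalF_cons]
    exact chain hX xs (q * ↑x) hnext (fun u s hm => hcov u s (List.mem_cons_of_mem _ hm))

end Chain

end InvSgAux

namespace InvSgAux

section Final

variable {I J : Type*} [Semigroup I] [Semigroup J]
variable (hI : IsInverseSemigroup I) (ρ : I →ₙ* J)
variable (hpure : ∀ a e : I, IsIdempotentElem e → ρ a = ρ e → IsIdempotentElem a)

include hI ρ hpure in
lemma final (a b : I) (hab : ρ a = ρ b)
    (H1 : (a * iv hI a) * (b * iv hI b) = a * iv hI a)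
    (H2 : (b * iv hI b) * (a * iv hI a) = b * iv hI b) : a = b := by
  have hDa := D_idem hI a
  have hDb := D_idem hI b
  have hDD : a * iv hI a = b * iv hI b := by
    rw [← H1, idem_comm hI hDa hDb, H2]
  have hh : IsIdempotentElem (iv hI a * b) :=
    hpure _ (iv hI a * a) (D'_idem hI a) (by rw [map_mul, map_mul, hab])
  have hg : IsIdempotentElem (a * iv hI b) :=
    hpure _ (b * iv hI b) (D_idem hI b) (by rw [map_mul, map_mul, hab])
  have E1 : iv hI b * a = iv hI a * b := by
    have h0 := iv_idem hI hh
    rwa [iv_mul hI, iv_iv hI] at h0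
  have E2 : b * iv hI a = a * iv hI b := by
    have h0 := iv_idem hI hg
    rwa [iv_mul hI, iv_iv hI] at h0
  have hba' : b = a * (iv hI a * b) := by
    calc b = (b * iv hI b) * b := by
          rw [show (b * iv hI b) * b = b from by simpa only [mul_assoc] using sp1 hI b]
    _ = (a * iv hI a) * b := by rw [hDD]
    _ = a * (iv hI a * b) := by rw [mul_assoc]
  have E3 : b = b * (iv hI a * a) := by
    calc b = a * (iv hI a * b) := hba'
    _ = a * (iv hI b * a) := by rw [E1]
    _ = (a * iv hI b) * a := by rw [mul_assoc]
    _ = (b * iv hI a) * a := by rw [E2]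
    _ = b * (iv hI a * a) := by rw [mul_assoc]
  have E4 : a = a * (iv hI b * b) := by
    calc a = (a * iv hI a) * a := by
          rw [show (a * iv hI a) * a = a from by simpa only [mul_assoc] using sp1 hI a]
    _ = (b * iv hI b) * a := by rw [hDD]
    _ = b * (iv hI b * a) := by rw [mul_assoc]
    _ = b * (iv hI a * b) := by rw [E1]
    _ = (b * iv hI a) * b := by rw [mul_assoc]
    _ = (a * iv hI b) * b := by rw [E2]
    _ = a * (iv hI b * b) := by rw [mul_assoc]
  have h3 : iv hI b = (iv hI a * a) * iv hI b := by
    calc iv hI b = iv hI (b * (iv hI a * a)) := by rw [← E3]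
    _ = iv hI (iv hI a * a) * iv hI b := by rw [iv_mul hI]
    _ = (iv hI a * a) * iv hI b := by rw [iv_idem hI (D'_idem hI a)]
  have h4 : iv hI a = (iv hI b * b) * iv hI a := by
    calc iv hI a = iv hI (a * (iv hI b * b)) := by rw [← E4]
    _ = iv hI (iv hI b * b) * iv hI a := by rw [iv_mul hI]
    _ = (iv hI b * b) * iv hI a := by rw [iv_idem hI (D'_idem hI b)]
  have h5 : iv hI b * b = (iv hI a * a) * (iv hI b * b) := by
    conv_lhs => rw [h3]
    rw [mul_assoc]
  have h6 : iv hI a * a = (iv hI b * b) * (iv hI a * a) := by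
    conv_lhs => rw [h4]
    rw [mul_assoc]
  have E5 : iv hI a * a = iv hI b * b := by
    rw [h5, idem_comm hI (D'_idem hI a) (D'_idem hI b), ← h6]
  have ha_bh : a = b * (iv hI a * b) := by
    calc a = (a * iv hI a) * a := by
          rw [show (a * iv hI a) * a = a from by simpa only [mul_assoc] using sp1 hI a]
    _ = a * (iv hI a * a) := by rw [mul_assoc]
    _ = a * (iv hI b * b) := by rw [E5]
    _ = (a * iv hI b) * b := by rw [mul_assoc]
    _ = (b * iv hI a) * b := by rw [E2]
    _ = b * (iv hI a * b) := by rw [mul_assoc]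
  calc a = b * (iv hI a * b) := ha_bh
  _ = (a * (iv hI a * b)) * (iv hI a * b) := by rw [← hba']
  _ = a * ((iv hI a * b) * (iv hI a * b)) := by simp only [mul_assoc]
  _ = a * (iv hI a * b) := by rw [hh.eq]
  _ = b := hba'.symm

end Final

end InvSgAux

open InvSgAux in
theorem card_bound_of_idempotentPure_quotient {I J : Type*} [Semigroup I] [Semigroup J]
    [Finite J]
    (hI : IsInverseSemigroup I) (hJ : IsInverseSemigroup J)
    (k n : ℕ) (hn : Nat.card J = n)
    (hgen : ∃ U : Set I, U.Finite ∧ U.ncard ≤ k ∧ Subsemigroup.closure U = ⊤)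
    (ρ : I →ₙ* J) (hsurj : Function.Surjective ρ)
    (hpure : ∀ a e : I, IsIdempotentElem e → ρ a = ρ e → IsIdempotentElem a) :
    Finite I ∧ Nat.card I ≤ n * (2 ^ (k * n) - 1) := by
  classical
  obtain ⟨U, hUfin, hUk, hUgen⟩ := hgen
  have hword : ∀ a : I, ∃ p : ↥U × List ↥U, a = evalF (↑p.1) (p.2.map Subtype.val) := by
    intro a
    have ha : a ∈ Subsemigroup.closure U := by rw [hUgen]; exact Subsemigroup.mem_top a
    refine Subsemigroup.closure_induction ?_ ?_ ha
    · intro x hx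
      exact ⟨(⟨x, hx⟩, []), rfl⟩
    · rintro x y _ _ ⟨⟨hx, tx⟩, ex⟩ ⟨⟨hy, ty⟩, ey⟩
      refine ⟨(hx, tx ++ hy :: ty), ?_⟩
      rw [List.map_append, evalF_append, ← ex, List.map_cons, evalF_cons, evalF_hom, ← ey]
  choose w hw using hword
  let F : I → Finset (↥U × J) × J := fun a =>
    ((fullE ρ (w a).1 (w a).2).toFinset, ρ a)
  have hFne : ∀ a, (F a).1.Nonempty := fun a =>
    ⟨((w a).1, ρ ↑(w a).1), by
      simp only [F, List.mem_toFinset, fullE]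
      exact List.mem_cons_self⟩
  have hinj : Function.Injective F := by
    intro a b hFab
    have hE : (fullE ρ (w a).1 (w a).2).toFinset = (fullE ρ (w b).1 (w b).2).toFinset :=
      congrArg Prod.fst hFab
    have hρab : ρ a = ρ b := congrArg Prod.snd hFab
    have hmemab : ∀ e, e ∈ fullE ρ (w b).1 (w b).2 → e ∈ fullE ρ (w a).1 (w a).2 := by
      intro e he
      have := List.mem_toFinset.2 he
      rw [← hE] at this
      exact List.mem_toFinset.1 this
    have hmemba : ∀ e, e ∈ fullE ρ (w a).1 (w a).2 → e ∈ fullE ρ (w b).1 (w b).2 := by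
      intro e he
      have := List.mem_toFinset.2 he
      rw [hE] at this
      exact List.mem_toFinset.1 this
    have key : ∀ x y : I, (∀ e, e ∈ fullE ρ (w y).1 (w y).2 → e ∈ fullE ρ (w x).1 (w x).2) →
        (x * iv hI x) * (y * iv hI y) = x * iv hI x := by
      intro x y hmem
      have hcov : ∀ u s, (u, s) ∈ fullE ρ (w y).1 (w y).2 → Cov hI ρ (x * iv hI x) (↑u) s :=
        fun u s h => covFull hI ρ x (w x).1 (w x).2 (hw x) u s (hmem _ h)
      have hstart : (x * iv hI x) * (↑(w y).1 * iv hI ↑(w y).1) = x * iv hI x :=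
        start hI ρ hpure (hcov (w y).1 _ List.mem_cons_self)
      have hch := chain hI ρ hpure (D_idem hI x) (w y).2 (↑(w y).1) hstart
        (fun u s hm => hcov u s (List.mem_cons_of_mem _ hm))
      rw [← hw y] at hch
      exact hch
    exact final hI ρ hpure a b hρab (key a b hmemab) (key b a hmemba)
  haveI : Finite ↥U := hUfin.to_subtype
  haveI : Fintype ↥U := Fintype.ofFinite ↥U
  haveI : Fintype J := Fintype.ofFinite J
  let F' : I → {s : Finset (↥U × J) // s.Nonempty} × J := fun a => (⟨(F a).1, hFne a⟩, (F a).2)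
  have hinj' : Function.Injective F' := by
    intro a b h
    apply hinj
    have h1 : (F a).1 = (F b).1 := congrArg (fun p => (Prod.fst p : {s : Finset (↥U × J) // s.Nonempty}).val) h
    have h2 := congrArg Prod.snd h
    exact Prod.ext h1 h2
  have hfin : Finite I := Finite.of_injective F' hinj'
  refine ⟨hfin, ?_⟩
  have hcard : Nat.card I ≤ Nat.card ({s : Finset (↥U × J) // s.Nonempty} × J) :=
    Nat.card_le_card_of_injective F' hinj'
  have hsub : Fintype.card {s : Finset (↥U × J) // s.Nonempty}
      = 2 ^ (Fintype.card ↥U * Fintype.card J) - 1 := by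
    rw [Fintype.card_congr (Equiv.subtypeEquivRight
      (fun s : Finset (↥U × J) => Finset.nonempty_iff_ne_empty))]
    rw [Fintype.card_subtype_compl, Fintype.card_subtype_eq (∅ : Finset (↥U × J)),
      Fintype.card_finset, Fintype.card_prod]
  have hJcard : Fintype.card J = n := by rw [← Nat.card_eq_fintype_card, hn]
  have hcardT : Nat.card ({s : Finset (↥U × J) // s.Nonempty} × J)
      = (2 ^ (Fintype.card ↥U * n) - 1) * n := by
    rw [Nat.card_prod, Nat.card_eq_fintype_card, Nat.card_eq_fintype_card, hsub, hJcard]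
  have hUcard : Fintype.card ↥U ≤ k := by
    have : Nat.card ↥U = U.ncard := Nat.card_coe_set_eq U
    rw [Nat.card_eq_fintype_card] at this
    omega
  have hmono : (2 ^ (Fintype.card ↥U * n) - 1) * n ≤ (2 ^ (k * n) - 1) * n := by
    apply Nat.mul_le_mul_right
    apply Nat.sub_le_sub_right
    apply Nat.pow_le_pow_right (by norm_num)
    exact Nat.mul_le_mul_right n hUcard
  calc Nat.card I ≤ (2 ^ (Fintype.card ↥U * n) - 1) * n := by rw [← hcardT]; exact hcard
  _ ≤ (2 ^ (k * n) - 1) * n := hmono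
  _ = n * (2 ^ (k * n) - 1) := Nat.mul_comm _ _
end

section
/- Let $I$ be an inverse semigroup generated by $\Sigma$ with idempotent problem $L$. The kernel of the canonical morphism from $I$ to the syntactic semigroup of $L$ is the greatest idempotent-pure congruence on $I$: every idempotent-pure congruence on $I$ is contained in it. -/
/-- Syntactic equivalence of two words of `Σ⁺` with respect to a language `L ⊆ Σ⁺`:
`u ≡_L v` iff for all (possibly empty) contexts `x, y ∈ Σ*`, `xuy ∈ L ↔ xvy ∈ L`. -/
def SynEq {α : Type*} (L : Set (FreeSemigroup α)) (u v : FreeSemigroup α) : Prop :=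
  (u ∈ L ↔ v ∈ L) ∧ (∀ x, x * u ∈ L ↔ x * v ∈ L) ∧
  (∀ y, u * y ∈ L ↔ v * y ∈ L) ∧ (∀ x y, x * u * y ∈ L ↔ x * v * y ∈ L)

/-- The syntactic congruence as a setoid on the free semigroup. -/
def synSetoid {α : Type*} (L : Set (FreeSemigroup α)) : Setoid (FreeSemigroup α) :=
  ⟨SynEq L,
   fun _ => ⟨Iff.rfl, fun _ => Iff.rfl, fun _ => Iff.rfl, fun _ _ => Iff.rfl⟩,
   fun h => ⟨h.1.symm, fun x => (h.2.1 x).symm, fun y => (h.2.2.1 y).symm,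
     fun x y => (h.2.2.2 x y).symm⟩,
   fun h1 h2 => ⟨h1.1.trans h2.1, fun x => (h1.2.1 x).trans (h2.2.1 x),
     fun y => (h1.2.2.1 y).trans (h2.2.2.1 y),
     fun x y => (h1.2.2.2 x y).trans (h2.2.2.2 x y)⟩⟩

/-- The idempotent problem of an inverse semigroup `I` with respect to the
canonical surjection `π : Σ⁺ → I`: the words representing idempotents. -/
def idemLang {α I : Type*} [Semigroup I] (π : FreeSemigroup α →ₙ* I) :
    Set (FreeSemigroup α) :=
  {w | IsIdempotentElem (π w)}

theorem syntactic_kernel_greatest_idempotentPure {α I : Type*} [Semigroup I]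
    (hI : IsInverseSemigroup I)
    (π : FreeSemigroup α →ₙ* I) (hπ : Function.Surjective π)
    (σ : I → I → Prop)
    (hrefl : ∀ a, σ a a) (hsymm : ∀ a b, σ a b → σ b a)
    (htrans : ∀ a b c, σ a b → σ b c → σ a c)
    (hcompat : ∀ x a b, σ a b → σ (x * a) (x * b) ∧ σ (a * x) (b * x))
    (hpure : ∀ e a, σ e a → IsIdempotentElem e → IsIdempotentElem a) :
    ∀ a b : I, σ a b → ∀ u v : FreeSemigroup α, π u = a → π v = b →
      SynEq (idemLang π) u v := by
  intro a b hab u v hu hv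
  have key : ∀ c d : I, σ c d → (IsIdempotentElem c ↔ IsIdempotentElem d) :=
    fun c d h => ⟨hpure c d h, hpure d c (hsymm _ _ h)⟩
  refine ⟨?_, ?_, ?_, ?_⟩
  · simpa [idemLang, hu, hv] using key a b hab
  · intro x
    simpa [idemLang, hu, hv] using key _ _ ((hcompat (π x) a b hab).1)
  · intro y
    simpa [idemLang, hu, hv] using key _ _ ((hcompat (π y) a b hab).2)
  · intro x y
    simpa [idemLang, hu, hv, mul_assoc] using
      key _ _ ((hcompat (π x) _ _ ((hcompat (π y) a b hab).2)).1)
end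

section
/- The syntactic semigroup of the idempotent problem of an inverse semigroup is, up to isomorphism, independent of the choice of semigroup generating set. -/
/-- Syntactic equivalence with respect to a subset of an arbitrary semigroup. -/
def SynEqS {S : Type*} [Semigroup S] (L : Set S) (a b : S) : Prop :=
  (a ∈ L ↔ b ∈ L) ∧ (∀ x, x * a ∈ L ↔ x * b ∈ L) ∧
  (∀ y, a * y ∈ L ↔ b * y ∈ L) ∧ (∀ x y, x * a * y ∈ L ↔ x * b * y ∈ L)

def synSetoidS {S : Type*} [Semigroup S] (L : Set S) : Setoid S :=
  ⟨SynEqS L,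
   fun _ => ⟨Iff.rfl, fun _ => Iff.rfl, fun _ => Iff.rfl, fun _ _ => Iff.rfl⟩,
   fun h => ⟨h.1.symm, fun x => (h.2.1 x).symm, fun y => (h.2.2.1 y).symm,
     fun x y => (h.2.2.2 x y).symm⟩,
   fun h1 h2 => ⟨h1.1.trans h2.1, fun x => (h1.2.1 x).trans (h2.2.1 x),
     fun y => (h1.2.2.1 y).trans (h2.2.2.1 y),
     fun x y => (h1.2.2.2 x y).trans (h2.2.2.2 x y)⟩⟩

lemma synEqS_mul {S : Type*} [Semigroup S] {L : Set S} {a a' b b' : S}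
    (ha : SynEqS L a a') (hb : SynEqS L b b') : SynEqS L (a * b) (a' * b') := by
  refine ⟨?_, ?_, ?_, ?_⟩
  · exact (ha.2.2.1 b).trans (hb.2.1 a')
  · intro x
    have h1 := ha.2.2.2 x b
    have h2 := hb.2.1 (x * a')
    simp only [mul_assoc] at h1 h2 ⊢
    exact h1.trans h2
  · intro y
    have h1 := ha.2.2.1 (b * y)
    have h2 := hb.2.2.2 a' y
    simp only [mul_assoc] at h1 h2 ⊢
    exact h1.trans h2
  · intro x y
    have h1 := ha.2.2.2 x (b * y)
    have h2 := hb.2.2.2 (x * a') y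
    simp only [mul_assoc] at h1 h2 ⊢
    exact h1.trans h2

lemma synEq_pullback {α S : Type*} [Semigroup S] (π : FreeSemigroup α →ₙ* S)
    (hπ : Function.Surjective π) (L : Set S) (u v : FreeSemigroup α) :
    SynEq (π ⁻¹' L) u v ↔ SynEqS L (π u) (π v) := by
  constructor
  · rintro ⟨h0, h1, h2, h3⟩
    refine ⟨h0, ?_, ?_, ?_⟩
    · intro x
      obtain ⟨w, rfl⟩ := hπ x
      have := h1 w
      simpa [Set.mem_preimage, map_mul] using this
    · intro y
      obtain ⟨w, rfl⟩ := hπ y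
      have := h2 w
      simpa [Set.mem_preimage, map_mul] using this
    · intro x y
      obtain ⟨w, rfl⟩ := hπ x
      obtain ⟨z, rfl⟩ := hπ y
      have := h3 w z
      simpa [Set.mem_preimage, map_mul] using this
  · rintro ⟨h0, h1, h2, h3⟩
    refine ⟨h0, ?_, ?_, ?_⟩
    · intro x
      have := h1 (π x)
      simpa [Set.mem_preimage, map_mul] using this
    · intro y
      have := h2 (π y)
      simpa [Set.mem_preimage, map_mul] using this
    · intro x y
      have := h3 (π x) (π y)
      simpa [Set.mem_preimage, map_mul] using this

theorem syntactic_semigroup_generating_set_invariant {α β I : Type*} [Semigroup I]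
    (hI : IsInverseSemigroup I)
    (π₁ : FreeSemigroup α →ₙ* I) (h₁ : Function.Surjective π₁)
    (π₂ : FreeSemigroup β →ₙ* I) (h₂ : Function.Surjective π₂) :
    ∃ φ : Quotient (synSetoid (idemLang π₁)) → Quotient (synSetoid (idemLang π₂)),
      Function.Bijective φ ∧
      ∀ (u v : FreeSemigroup α) (u' v' : FreeSemigroup β),
        φ (Quotient.mk (synSetoid (idemLang π₁)) u)
          = Quotient.mk (synSetoid (idemLang π₂)) u' →
        φ (Quotient.mk (synSetoid (idemLang π₁)) v)
          = Quotient.mk (synSetoid (idemLang π₂)) v' →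
        φ (Quotient.mk (synSetoid (idemLang π₁)) (u * v))
          = Quotient.mk (synSetoid (idemLang π₂)) (u' * v') := by
  classical
  set E : Set I := {e : I | IsIdempotentElem e} with hE
  have hL₁ : idemLang π₁ = π₁ ⁻¹' E := rfl
  have hL₂ : idemLang π₂ = π₂ ⁻¹' E := rfl
  -- maps to the quotient of I
  let f₁ : Quotient (synSetoid (idemLang π₁)) → Quotient (synSetoidS E) :=
    Quotient.lift (fun u => Quotient.mk (synSetoidS E) (π₁ u))
      (fun u v h => Quotient.sound ((synEq_pullback π₁ h₁ E u v).mp h))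
  let f₂ : Quotient (synSetoid (idemLang π₂)) → Quotient (synSetoidS E) :=
    Quotient.lift (fun u => Quotient.mk (synSetoidS E) (π₂ u))
      (fun u v h => Quotient.sound ((synEq_pullback π₂ h₂ E u v).mp h))
  have hf₁ : Function.Bijective f₁ := by
    constructor
    · intro a b
      induction a using Quotient.ind
      induction b using Quotient.ind
      intro h
      exact Quotient.sound ((synEq_pullback π₁ h₁ E _ _).mpr (Quotient.exact h))
    · intro q
      induction q using Quotient.ind with
      | _ s =>
        obtain ⟨w, rfl⟩ := h₁ s
        exact ⟨Quotient.mk _ w, rfl⟩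
  have hf₂ : Function.Bijective f₂ := by
    constructor
    · intro a b
      induction a using Quotient.ind
      induction b using Quotient.ind
      intro h
      exact Quotient.sound ((synEq_pullback π₂ h₂ E _ _).mpr (Quotient.exact h))
    · intro q
      induction q using Quotient.ind with
      | _ s =>
        obtain ⟨w, rfl⟩ := h₂ s
        exact ⟨Quotient.mk _ w, rfl⟩
  let e₂ := Equiv.ofBijective f₂ hf₂
  refine ⟨fun q => e₂.symm (f₁ q), ?_, ?_⟩
  · exact e₂.symm.bijective.comp hf₁
  · intro u v u' v' hu hv
    have hu' : f₁ (Quotient.mk _ u) = f₂ (Quotient.mk _ u') := by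
      have := congrArg e₂ hu
      simpa [e₂, Equiv.apply_symm_apply] using this
    have hv' : f₁ (Quotient.mk _ v) = f₂ (Quotient.mk _ v') := by
      have := congrArg e₂ hv
      simpa [e₂, Equiv.apply_symm_apply] using this
    have ru : SynEqS E (π₁ u) (π₂ u') := Quotient.exact hu'
    have rv : SynEqS E (π₁ v) (π₂ v') := Quotient.exact hv'
    have key : f₁ (Quotient.mk _ (u * v)) = f₂ (Quotient.mk _ (u' * v')) := by
      show Quotient.mk (synSetoidS E) (π₁ (u * v)) = Quotient.mk (synSetoidS E) (π₂ (u' * v'))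
      rw [map_mul, map_mul]
      exact Quotient.sound (synEqS_mul ru rv)
    show e₂.symm (f₁ (Quotient.mk _ (u * v))) = _
    rw [key]
    exact e₂.symm_apply_apply (Quotient.mk _ (u' * v'))
end

section
/- (Anisimov's Theorem for inverse semigroups) A finitely generated inverse semigroup is finite if and only if its idempotent problem with respect to some (equivalently, any) finite generating set is a regular language. -/
/-- Syntactic equivalence of words of `Σ*` with respect to `L ⊆ Σ*`. -/
def SynEqM {α : Type*} (L : Set (FreeMonoid α)) (u v : FreeMonoid α) : Prop :=
  ∀ x y : FreeMonoid α, x * u * y ∈ L ↔ x * v * y ∈ L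

/-- The syntactic congruence as a setoid on the free monoid; the quotient is
the syntactic monoid of `L`. -/
def synSetoidM {α : Type*} (L : Set (FreeMonoid α)) : Setoid (FreeMonoid α) :=
  ⟨SynEqM L, fun _ _ _ => Iff.rfl, fun h x y => (h x y).symm,
   fun h1 h2 x y => (h1 x y).trans (h2 x y)⟩

/-- The canonical embedding of the free semigroup into the free monoid. -/
def toFreeMonoid {α : Type*} : FreeSemigroup α →ₙ* FreeMonoid α :=
  FreeSemigroup.lift FreeMonoid.of

/-- The idempotent problem of `I` w.r.t. `π : Σ⁺ → I`, viewed as a language in `Σ*`: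
the (nonempty) words representing idempotent elements of `I`. -/
def idemLangM {α I : Type*} [Semigroup I] (π : FreeSemigroup α →ₙ* I) :
    Set (FreeMonoid α) :=
  {w | ∃ u : FreeSemigroup α, toFreeMonoid u = w ∧ IsIdempotentElem (π u)}

namespace Anisimov
open FreeMonoid
variable {α I : Type*} [Semigroup I] (π : FreeSemigroup α →ₙ* I)

def phi : FreeMonoid α →* WithOne I :=
  FreeMonoid.lift (fun a => ((π (FreeSemigroup.of a) : I) : WithOne I))

lemma phi_toFreeMonoid (u : FreeSemigroup α) : phi π (toFreeMonoid u) = ↑(π u) := by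
  have : (phi π).toMulHom.comp toFreeMonoid
      = (WithOne.coeMulHom.comp π : FreeSemigroup α →ₙ* WithOne I) := by
    apply FreeSemigroup.hom_ext
    funext a
    simp [toFreeMonoid, phi]
  exact DFunLike.congr_fun this u

lemma exists_sem (l : List α) (a : α) :
    ∃ u : FreeSemigroup α, toFreeMonoid u = FreeMonoid.ofList (a :: l) := by
  induction l generalizing a with
  | nil => exact ⟨FreeSemigroup.of a, by simp [toFreeMonoid]⟩
  | cons b t ih =>
    obtain ⟨u, hu⟩ := ih b
    refine ⟨FreeSemigroup.of a * u, ?_⟩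
    rw [map_mul, hu]
    show FreeMonoid.of a * _ = _
    rw [← FreeMonoid.ofList_singleton, ← FreeMonoid.ofList_append]
    rfl

lemma mem_idemLang_iff (w : FreeMonoid α) :
    w ∈ idemLangM π ↔ ∃ i : I, phi π w = ↑i ∧ IsIdempotentElem i := by
  constructor
  · rintro ⟨u, rfl, hid⟩
    exact ⟨π u, phi_toFreeMonoid π u, hid⟩
  · rintro ⟨i, hw, hid⟩
    rcases h : FreeMonoid.toList w with _ | ⟨a, l⟩
    · exfalso
      have : w = 1 := by
        have := FreeMonoid.ofList_toList w
        rw [h] at this; exact this.symm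
      rw [this, map_one] at hw
      exact WithOne.one_ne_coe hw
    · obtain ⟨u, hu⟩ := exists_sem l a
      have hw2 : toFreeMonoid u = w := by
        rw [hu, ← h, FreeMonoid.ofList_toList]
      have : (↑(π u) : WithOne I) = ↑i := by rw [← phi_toFreeMonoid π u, hw2, hw]
      exact ⟨u, hw2, WithOne.coe_inj.mp this ▸ hid⟩

lemma phi_surj (hπ : Function.Surjective π) : Function.Surjective (phi π) := by
  intro x
  rcases Option.eq_none_or_eq_some x with h1 | ⟨i, hi⟩
  · exact ⟨1, by rw [map_one]; exact h1.symm⟩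
  · obtain ⟨u, hu⟩ := hπ i
    exact ⟨toFreeMonoid u, by rw [phi_toFreeMonoid, hu]; exact hi.symm⟩

lemma synEq_of_phi_eq {u v : FreeMonoid α} (h : phi π u = phi π v) :
    SynEqM (idemLangM π) u v := by
  intro x y
  rw [mem_idemLang_iff, mem_idemLang_iff, map_mul, map_mul, map_mul, map_mul, h]

lemma coe_mul_coe_mul (s t : WithOne I) (c : I) : ∃ d : I, s * ↑c * t = ↑d := by
  rcases Option.eq_none_or_eq_some s with hs | ⟨a, hs⟩ <;>
    rcases Option.eq_none_or_eq_some t with ht | ⟨b, ht⟩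
  · exact ⟨c, by rw [show s = 1 from hs, show t = 1 from ht, one_mul, mul_one]⟩
  · exact ⟨c * b, by rw [show s = 1 from hs, show t = (b : WithOne I) from ht, one_mul, WithOne.coe_mul]⟩
  · exact ⟨a * c, by rw [show s = (a : WithOne I) from hs, show t = 1 from ht, mul_one, WithOne.coe_mul]⟩
  · exact ⟨a * c * b, by
      rw [show s = (a : WithOne I) from hs, show t = (b : WithOne I) from ht,
        WithOne.coe_mul, WithOne.coe_mul]⟩

lemma idem_coe_iff (c : I) : IsIdempotentElem ((c : WithOne I)) ↔ IsIdempotentElem c := by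
  unfold IsIdempotentElem
  rw [← WithOne.coe_mul, WithOne.coe_inj]

lemma K1 (hπ : Function.Surjective π) {u v : FreeMonoid α}
    (hu : ∃ c : I, phi π u = ↑c) (hv : ∃ c : I, phi π v = ↑c)
    (hsyn : SynEqM (idemLangM π) u v) (s t : WithOne I) :
    IsIdempotentElem (s * phi π u * t) ↔ IsIdempotentElem (s * phi π v * t) := by
  obtain ⟨x, hx⟩ := phi_surj π hπ s
  obtain ⟨y, hy⟩ := phi_surj π hπ t
  obtain ⟨c, hc⟩ := hu
  obtain ⟨c', hc'⟩ := hv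
  obtain ⟨d, hd⟩ := coe_mul_coe_mul s t c
  obtain ⟨d', hd'⟩ := coe_mul_coe_mul s t c'
  have hmem := hsyn x y
  rw [mem_idemLang_iff, mem_idemLang_iff, map_mul, map_mul, map_mul, map_mul, hx, hy, hc, hc']
    at hmem
  rw [hc, hc', hd, hd', idem_coe_iff, idem_coe_iff]
  constructor
  · intro hid
    obtain ⟨i, hi1, hi2⟩ := hmem.mp ⟨d, hd, hid⟩
    rwa [show i = d' from WithOne.coe_inj.mp (hi1 ▸ hd'.symm ▸ rfl)] at hi2
  · intro hid
    obtain ⟨i, hi1, hi2⟩ := hmem.mpr ⟨d', hd', hid⟩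
    rwa [show i = d from WithOne.coe_inj.mp (hi1 ▸ hd.symm ▸ rfl)] at hi2

lemma isInv_withOne (hI : IsInverseSemigroup I) : IsInverseSemigroup (WithOne I) := by
  intro x
  rcases Option.eq_none_or_eq_some x with hx | ⟨a, hx⟩
  · rw [show x = 1 from hx]
    exact ⟨1, ⟨by simp, by simp⟩, fun y ⟨h1, h2⟩ => by simpa using h1⟩
  · rw [show x = (a : WithOne I) from hx]
    obtain ⟨b, ⟨hb1, hb2⟩, hbu⟩ := hI a
    refine ⟨(b : WithOne I), ⟨?_, ?_⟩, ?_⟩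
    · rw [← WithOne.coe_mul, ← WithOne.coe_mul, hb1]
    · rw [← WithOne.coe_mul, ← WithOne.coe_mul, hb2]
    · rintro y ⟨h1, h2⟩
      rcases Option.eq_none_or_eq_some y with hy | ⟨c, hy⟩
      · exfalso
        rw [show y = 1 from hy] at h1 h2
        rw [one_mul, mul_one] at h2
        exact WithOne.coe_ne_one h2
      · rw [show y = (c : WithOne I) from hy] at h1 h2 ⊢
        rw [← WithOne.coe_mul, ← WithOne.coe_mul, WithOne.coe_inj] at h1 h2
        rw [WithOne.coe_inj]
        exact hbu c ⟨h1, h2⟩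

end Anisimov

namespace ISG
variable {S : Type*} [Semigroup S] (h : IsInverseSemigroup S)
include h

noncomputable def inv (a : S) : S := (h a).exists.choose

lemma spec1 (a : S) : a * inv h a * a = a := (h a).exists.choose_spec.1
lemma spec2 (a : S) : inv h a * a * inv h a = inv h a := (h a).exists.choose_spec.2

lemma inv_eq {a y : S} (h1 : a * y * a = a) (h2 : y * a * y = y) : y = inv h a :=
  (h a).unique ⟨h1, h2⟩ ⟨spec1 h a, spec2 h a⟩

lemma inv_inv (a : S) : inv h (inv h a) = a :=
  (inv_eq h (spec2 h a) (spec1 h a)).symm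

lemma idem_inv {e : S} (he : IsIdempotentElem e) : inv h e = e := by
  refine (inv_eq h ?_ ?_).symm <;> rw [he, he]

-- helper for rewriting under right-assoc normal form
lemma idem_l {e : S} (he : IsIdempotentElem e) (x : S) : e * (e * x) = e * x := by
  rw [← mul_assoc, he]

lemma idem_mul_inv (a : S) : IsIdempotentElem (a * inv h a) := by
  show _ * _ = _
  rw [mul_assoc a (inv h a) (a * inv h a), ← mul_assoc (inv h a) a (inv h a), spec2]

lemma idem_inv_mul (a : S) : IsIdempotentElem (inv h a * a) := by
  show _ * _ = _
  rw [mul_assoc (inv h a) a (inv h a * a), ← mul_assoc a (inv h a) a, spec1]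

lemma idem_mul_idem {e f : S} (he : IsIdempotentElem e) (hf : IsIdempotentElem f) :
    IsIdempotentElem (e * f) := by
  set s := inv h (e * f) with hs
  have key : f * s * e = s := by
    apply inv_eq h
    · calc e * f * (f * s * e) * (e * f)
          = e * (f * (f * (s * (e * (e * f))))) := by simp only [mul_assoc]
        _ = e * (f * (s * (e * f))) := by rw [idem_l h hf, idem_l h he]
        _ = e * f * s * (e * f) := by simp only [mul_assoc]
        _ = e * f := by rw [hs, spec1]
    · calc f * s * e * (e * f) * (f * s * e)
          = f * (s * (e * (e * (f * (f * (s * e)))))) := by simp only [mul_assoc]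
        _ = f * (s * (e * (f * (s * e)))) := by rw [idem_l h he, idem_l h hf]
        _ = f * (s * (e * f) * (s * e)) := by simp only [mul_assoc]
        _ = f * (s * (e * f) * s * e) := by simp only [mul_assoc]
        _ = f * (s * e) := by rw [spec2]
        _ = f * s * e := by rw [mul_assoc]
  have hsidem : IsIdempotentElem s := by
    rw [← key]
    show _ * _ = _
    calc f * s * e * (f * s * e)
        = f * (s * (e * f) * (s * e)) := by simp only [mul_assoc]
      _ = f * (s * (e * f) * s * e) := by simp only [mul_assoc]
      _ = f * (s * e) := by rw [spec2]
      _ = f * s * e := by rw [mul_assoc]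
  -- e*f is an inverse of s, and s is its own inverse, so e*f = s idempotent
  have : e * f = inv h s := inv_eq h (by rw [hs, spec2]) (by rw [hs, spec1])
  rw [this, idem_inv h hsidem]
  exact hsidem

lemma idem_comm {e f : S} (he : IsIdempotentElem e) (hf : IsIdempotentElem f) :
    e * f = f * e := by
  have hef := idem_mul_idem h he hf
  have hfe := idem_mul_idem h hf he
  have h1 : (e * f) * (f * e) * (e * f) = e * f := by
    calc e * f * (f * e) * (e * f)
        = e * (f * (f * (e * (e * f)))) := by simp only [mul_assoc]
      _ = e * (f * (e * f)) := by rw [idem_l h hf, idem_l h he]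
      _ = (e * f) * (e * f) := by simp only [mul_assoc]
      _ = e * f := hef
  have h2 : (f * e) * (e * f) * (f * e) = f * e := by
    calc f * e * (e * f) * (f * e)
        = f * (e * (e * (f * (f * e)))) := by simp only [mul_assoc]
      _ = f * (e * (f * e)) := by rw [idem_l h he, idem_l h hf]
      _ = (f * e) * (f * e) := by simp only [mul_assoc]
      _ = f * e := hfe
  have : f * e = inv h (e * f) := inv_eq h h1 h2
  rw [this, idem_inv h hef]

lemma mul_inv_rev (a b : S) : inv h (a * b) = inv h b * inv h a := by
  refine (inv_eq h ?_ ?_).symm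
  · calc a * b * (inv h b * inv h a) * (a * b)
        = a * (b * inv h b * (inv h a * a)) * b := by simp only [mul_assoc]
      _ = a * (inv h a * a * (b * inv h b)) * b := by
          rw [idem_comm h (idem_mul_inv h b) (idem_inv_mul h a)]
      _ = a * inv h a * a * (b * inv h b * b) := by simp only [mul_assoc]
      _ = a * b := by rw [spec1, spec1]
  · calc inv h b * inv h a * (a * b) * (inv h b * inv h a)
        = inv h b * (inv h a * a * (b * inv h b)) * inv h a := by simp only [mul_assoc]
      _ = inv h b * (b * inv h b * (inv h a * a)) * inv h a := by
          rw [idem_comm h (idem_inv_mul h a) (idem_mul_inv h b)]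
      _ = inv h b * b * inv h b * (inv h a * a * inv h a) := by simp only [mul_assoc]
      _ = inv h b * inv h a := by rw [spec2, spec2]

end ISG

namespace ISG
variable {S : Type*} [Semigroup S] (h : IsInverseSemigroup S)
include h

lemma comm3 {p q : S} (hp : IsIdempotentElem p) (hq : IsIdempotentElem q) (x : S) :
    p * (q * x) = q * (p * x) := by
  rw [← mul_assoc, idem_comm h hp hq, mul_assoc]

lemma tri1 (a x : S) : a * (inv h a * (a * x)) = a * x := by
  rw [← mul_assoc, ← mul_assoc, spec1]

lemma idem_mul_idem_right {p q : S} (hp : IsIdempotentElem p) (hq : IsIdempotentElem q) :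
    (p * q) * p = p * q := by
  rw [mul_assoc, idem_comm h hq hp, ← mul_assoc, hp]

lemma le_dom (a c r : S) (ha : a = c * r) :
    (a * inv h a) * (c * inv h c) = a * inv h a := by
  have h1 : (c * inv h c) * (a * inv h a) = a * inv h a := by
    conv_rhs => rw [ha, mul_inv_rev h]
    calc c * inv h c * (a * inv h a)
        = c * (inv h c * (c * (r * inv h (c * r)))) := by rw [ha]; simp only [mul_assoc]
      _ = c * (r * inv h (c * r)) := by rw [tri1]
      _ = c * r * (inv h r * inv h c) := by rw [mul_inv_rev h, mul_assoc]
  calc (a * inv h a) * (c * inv h c)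
      = (c * inv h c) * (a * inv h a) := idem_comm h (idem_mul_inv h a) (idem_mul_inv h c)
    _ = a * inv h a := h1

lemma step {e u v g : S}
    (h1 : e * (u * inv h u) = e)
    (h2 : e * ((v * g) * inv h (v * g)) = e)
    (hH : IsIdempotentElem (inv h u * v)) :
    e * ((u * g) * inv h (u * g)) = e := by
  set U := inv h u with hUdef
  set gi := inv h g with hgidef
  have hG : IsIdempotentElem (g * gi) := idem_mul_inv h g
  have hw : IsIdempotentElem (U * u) := idem_inv_mul h u
  have hq : IsIdempotentElem ((v * g) * inv h (v * g)) := idem_mul_inv h (v * g)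
  have hp : IsIdempotentElem (u * U) := idem_mul_inv h u
  set x := (u * U) * ((v * g) * inv h (v * g)) with hx
  have hVu : inv h v * u = U * v := by
    have h3 : inv h (U * v) = inv h v * u := by
      rw [mul_inv_rev h, hUdef, inv_inv h]
    rw [← h3, idem_inv h hH]
  have hUuU : U * (u * U) = U := by
    rw [← mul_assoc, hUdef, spec2]
  have claimx : x = u * ((U * v) * (g * (gi * U))) := by
    calc x = x * (u * U) := (idem_mul_idem_right h hp hq).symm
      _ = u * (U * (v * (g * (gi * (inv h v * (u * U)))))) := by
          rw [hx, mul_inv_rev h v g, ← hgidef]; simp only [mul_assoc]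
      _ = u * (U * (v * (g * (gi * ((U * v) * U))))) := by
          rw [← mul_assoc (inv h v) u U, hVu]
      _ = u * ((U * v) * ((g * gi) * ((U * v) * U))) := by simp only [mul_assoc]
      _ = u * ((U * v) * ((U * v) * ((g * gi) * U))) := by rw [comm3 h hG hH]
      _ = u * ((U * v) * ((g * gi) * U)) := by rw [idem_l h hH]
      _ = u * ((U * v) * (g * (gi * U))) := by simp only [mul_assoc]
  have claimxT : x * ((u * g) * inv h (u * g)) = x := by
    calc x * ((u * g) * inv h (u * g))
        = u * ((U * v) * ((g * gi) * ((U * u) * ((g * gi) * U)))) := by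
          rw [claimx, mul_inv_rev h u g, ← hgidef, ← hUdef]; simp only [mul_assoc]
      _ = u * ((U * v) * ((g * gi) * ((g * gi) * ((U * u) * U)))) := by
          rw [comm3 h hw hG]
      _ = u * ((U * v) * ((g * gi) * ((U * u) * U))) := by rw [idem_l h hG]
      _ = u * ((U * v) * ((g * gi) * U)) := by rw [mul_assoc U u U, hUuU]
      _ = x := by rw [claimx]; simp only [mul_assoc]
  have ex : e * x = e := by
    rw [hx, ← mul_assoc, h1, h2]
  calc e * ((u * g) * inv h (u * g))
      = (e * x) * ((u * g) * inv h (u * g)) := by rw [ex]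
    _ = e * (x * ((u * g) * inv h (u * g))) := by rw [mul_assoc]
    _ = e * x := by rw [claimxT]
    _ = e := ex

lemma eq_of_idem_pure {a b : S}
    (hidem : IsIdempotentElem (inv h a * b))
    (hdom : a * inv h a = b * inv h b) : a = b := by
  have hk : inv h b * a = inv h a * b := by
    have h3 : inv h (inv h a * b) = inv h b * a := by
      rw [mul_inv_rev h, inv_inv h]
    rw [← h3, idem_inv h hidem]
  have ha : a = b * (inv h a * b) := by
    calc a = a * inv h a * a := (spec1 h a).symm
      _ = b * inv h b * a := by rw [hdom]
      _ = b * (inv h b * a) := by rw [mul_assoc]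
      _ = b * (inv h a * b) := by rw [hk]
  have hb : b = a * (inv h a * b) := by
    calc b = b * inv h b * b := (spec1 h b).symm
      _ = a * inv h a * b := by rw [hdom]
      _ = a * (inv h a * b) := by rw [mul_assoc]
  calc a = b * (inv h a * b) := ha
    _ = a * (inv h a * b) * (inv h a * b) := by rw [← hb]
    _ = a * ((inv h a * b) * (inv h a * b)) := by rw [mul_assoc]
    _ = a * (inv h a * b) := by rw [hidem]
    _ = b := hb.symm

end ISG

namespace Anisimov
open FreeMonoid
variable {α I : Type*} [Semigroup I] (π : FreeSemigroup α →ₙ* I)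

def qm (w : FreeMonoid α) : Quotient (synSetoidM (idemLangM π)) :=
  Quotient.mk (synSetoidM (idemLangM π)) w

open scoped Classical in
noncomputable def tag (t : List α) : Option (Quotient (synSetoidM (idemLangM π))) :=
  if t = [] then none else some (qm π (ofList t))

def DD (l : List α) : Set (α × Option (Quotient (synSetoidM (idemLangM π)))) :=
  {p | ∃ t₁ t₂ : List α, l = t₁ ++ p.1 :: t₂ ∧ p.2 = tag π t₁}

lemma phi_coe {l : List α} (hl : l ≠ []) : ∃ c : I, phi π (ofList l) = ↑c := by
  rcases l with _ | ⟨a, t⟩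
  · exact absurd rfl hl
  · obtain ⟨u, hu⟩ := exists_sem t a
    exact ⟨π u, by rw [← hu, phi_toFreeMonoid]⟩

lemma synEq_of_qm {u v : FreeMonoid α} (hq : qm π u = qm π v) :
    SynEqM (idemLangM π) u v := Quotient.exact hq

lemma pre (hI : IsInverseSemigroup I) (hπ : Function.Surjective π) {l l' : List α}
    (hD : DD π l' ⊆ DD π l) :
    ∀ (t₁ : List α) (g : α), (∃ r, t₁ ++ g :: r = l') →
      (phi π (ofList l) * ISG.inv (isInv_withOne hI) (phi π (ofList l))) *
        (phi π (ofList (t₁ ++ [g])) *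
          ISG.inv (isInv_withOne hI) (phi π (ofList (t₁ ++ [g])))) =
      phi π (ofList l) * ISG.inv (isInv_withOne hI) (phi π (ofList l)) := by
  set h1 := isInv_withOne hI with hh1
  intro t₁
  induction t₁ using List.reverseRecOn with
  | nil =>
    rintro g ⟨r, hr⟩
    have hmem : ((g, (none : Option _)) : α × Option _) ∈ DD π l' :=
      ⟨[], r, by simpa using hr.symm, by simp [tag]⟩
    obtain ⟨v₁, v₂, hl, htag⟩ := hD hmem
    have hv₁ : v₁ = [] := by
      by_contra hne
      rw [tag, if_neg hne] at htag
      simp at htag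
    rw [hv₁] at hl
    have ha : phi π (ofList l) = phi π (ofList [g]) * phi π (ofList v₂) := by
      rw [hl]; simp only [List.nil_append]
      rw [show (g :: v₂ : List α) = [g] ++ v₂ from rfl, ofList_append, map_mul]
    simpa using ISG.le_dom h1 _ _ _ ha
  | append_singleton s g₀ ih =>
    rintro g ⟨r, hr⟩
    have hu := ih g₀ ⟨g :: r, by rw [← hr]; simp⟩
    have hmem : ((g, tag π (s ++ [g₀])) : α × Option _) ∈ DD π l' :=
      ⟨s ++ [g₀], r, by rw [← hr], rfl⟩
    obtain ⟨v₁, v₂, hl, htag⟩ := hD hmem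
    have hsg : (s ++ [g₀] : List α) ≠ [] := by simp
    have hv₁ : v₁ ≠ [] := by
      intro hne
      rw [hne] at htag
      simp only [tag, if_neg hsg, if_pos rfl] at htag
      simp at htag
    have qeq : qm π (ofList (s ++ [g₀])) = qm π (ofList v₁) := by
      simp only [tag, if_neg hsg, if_neg hv₁] at htag
      exact Option.some.inj htag
    set u := phi π (ofList (s ++ [g₀])) with hudef
    set vphi := phi π (ofList v₁) with hvdef
    set gph := phi π (ofList [g]) with hgdef
    have hidem : IsIdempotentElem (ISG.inv h1 u * vphi) := by
      have hiff := K1 π hπ (phi_coe π hsg) (phi_coe π hv₁)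
        (synEq_of_qm π qeq) (ISG.inv h1 u) 1
      rw [mul_one, mul_one] at hiff
      exact hiff.mp (ISG.idem_inv_mul h1 u)
    have hc : (phi π (ofList l) * ISG.inv h1 (phi π (ofList l))) *
        ((vphi * gph) * ISG.inv h1 (vphi * gph)) =
        phi π (ofList l) * ISG.inv h1 (phi π (ofList l)) := by
      have ha : phi π (ofList l) = (vphi * gph) * phi π (ofList v₂) := by
        rw [hl, show (v₁ ++ g :: v₂ : List α) = (v₁ ++ [g]) ++ v₂ from by simp,
          ofList_append, ofList_append, map_mul, map_mul]
      exact ISG.le_dom h1 _ _ _ ha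
    have := ISG.step h1 hu hc hidem
    rwa [show u * gph = phi π (ofList ((s ++ [g₀]) ++ [g])) from by
      rw [ofList_append, map_mul]] at this
    
lemma main (hI : IsInverseSemigroup I) (hπ : Function.Surjective π) {l l' : List α}
    (hl : l ≠ []) (hl' : l' ≠ [])
    (hq : qm π (ofList l) = qm π (ofList l')) (hD : DD π l = DD π l') :
    phi π (ofList l) = phi π (ofList l') := by
  set h1 := isInv_withOne hI with hh1
  set a := phi π (ofList l) with hadef
  set b := phi π (ofList l') with hbdef
  have dom1 : (a * ISG.inv h1 a) * (b * ISG.inv h1 b) = a * ISG.inv h1 a := by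
    obtain ⟨t₁, g, hconcat⟩ := (List.eq_nil_or_concat l').resolve_left hl'
    have := pre π hI hπ (le_of_eq hD.symm) t₁ g ⟨[], by simp [hconcat]⟩
    rwa [show (t₁ ++ [g] : List α) = l' from by simp [hconcat]] at this
  have dom2 : (b * ISG.inv h1 b) * (a * ISG.inv h1 a) = b * ISG.inv h1 b := by
    obtain ⟨t₁, g, hconcat⟩ := (List.eq_nil_or_concat l).resolve_left hl
    have := pre π hI hπ (le_of_eq hD) t₁ g ⟨[], by simp [hconcat]⟩
    rwa [show (t₁ ++ [g] : List α) = l from by simp [hconcat]] at this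
  have hdom : a * ISG.inv h1 a = b * ISG.inv h1 b := by
    calc a * ISG.inv h1 a = (a * ISG.inv h1 a) * (b * ISG.inv h1 b) := dom1.symm
      _ = (b * ISG.inv h1 b) * (a * ISG.inv h1 a) :=
          ISG.idem_comm h1 (ISG.idem_mul_inv h1 a) (ISG.idem_mul_inv h1 b)
      _ = b * ISG.inv h1 b := dom2
  have hidem : IsIdempotentElem (ISG.inv h1 a * b) := by
    have hiff := K1 π hπ (phi_coe π hl) (phi_coe π hl')
      (synEq_of_qm π hq) (ISG.inv h1 a) 1
    rw [mul_one, mul_one] at hiff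
    exact hiff.mp (ISG.idem_inv_mul h1 a)
  exact ISG.eq_of_idem_pure h1 hidem hdom

end Anisimov

theorem anisimov_inverse_semigroups
    {α I : Type*} [Finite α] [Semigroup I]
    (hI : IsInverseSemigroup I)
    (π : FreeSemigroup α →ₙ* I) (hπ : Function.Surjective π) :
    Finite I ↔ Finite (Quotient (synSetoidM (idemLangM π))) := by
  classical
  constructor
  · intro hfin
    haveI := hfin
    haveI : Finite (Option I) := Finite.of_equiv _ (Equiv.optionEquivSumPUnit.{0} I).symm
    haveI : Finite (WithOne I) := Finite.of_equiv (Option I) (Equiv.refl _)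
    haveI : Finite (Set.range (Anisimov.phi π)) := Subtype.finite
    refine Finite.of_surjective
      (fun x : Set.range (Anisimov.phi π) =>
        (Quotient.mk (synSetoidM (idemLangM π)) x.2.choose)) ?_
    intro m
    obtain ⟨w, rfl⟩ := Quotient.exists_rep m
    have hmem : Anisimov.phi π w ∈ Set.range (Anisimov.phi π) := ⟨w, rfl⟩
    exact ⟨⟨Anisimov.phi π w, hmem⟩,
      Quotient.sound (Anisimov.synEq_of_phi_eq π hmem.choose_spec)⟩
  · intro hM
    haveI : Finite (Quotient (synSetoidM (idemLangM π))) := hM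
    haveI : Finite (Option (Quotient (synSetoidM (idemLangM π)))) :=
      Finite.of_equiv _ (Equiv.optionEquivSumPUnit.{0} _).symm
    set F : I → Quotient (synSetoidM (idemLangM π)) ×
        Set (α × Option (Quotient (synSetoidM (idemLangM π)))) :=
      fun i => (Anisimov.qm π (FreeMonoid.ofList
                  (FreeMonoid.toList (toFreeMonoid (hπ i).choose))),
                Anisimov.DD π (FreeMonoid.toList (toFreeMonoid (hπ i).choose))) with hF
    have key : ∀ i : I, Anisimov.phi π
        (FreeMonoid.ofList (FreeMonoid.toList (toFreeMonoid (hπ i).choose)))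
        = (i : WithOne I) := by
      intro i
      rw [FreeMonoid.ofList_toList, Anisimov.phi_toFreeMonoid, (hπ i).choose_spec]
    have hne : ∀ i : I, FreeMonoid.toList (toFreeMonoid (hπ i).choose) ≠ [] := by
      intro i hcon
      have h2 := key i
      rw [hcon, show (FreeMonoid.ofList ([] : List α)) = 1 from rfl, map_one] at h2
      exact WithOne.one_ne_coe h2
    have hinj : Function.Injective F := by
      intro i j hij
      rw [hF, Prod.mk.injEq] at hij
      have h3 := Anisimov.main π hI hπ (hne i) (hne j) hij.1 hij.2
      rw [key i, key j] at h3
      exact WithOne.coe_inj.mp h3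
    exact Finite.of_injective F hinj
end

section
/- Up to isomorphism, there are only finitely many inverse semigroups having a given fixed regular language as their idempotent problem. -/
namespace InvSgpProof

variable {S : Type*} [Semigroup S]

/-! ### Generic semigroup rewriting helpers -/

theorem cl {a : S} (ha : a * a = a) (R : S) : a * (a * R) = a * R := by
  rw [← mul_assoc, ha]

theorem sw {a b : S} (hab : a * b = b * a) (R : S) : a * (b * R) = b * (a * R) := by
  rw [← mul_assoc, hab, mul_assoc]

/-! ### The inverse operation -/

noncomputable def iv (h : IsInverseSemigroup S) (x : S) : S := (h x).choose

theorem iv_spec1 (h : IsInverseSemigroup S) (x : S) : x * iv h x * x = x :=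
  (h x).choose_spec.1.1

theorem iv_spec2 (h : IsInverseSemigroup S) (x : S) : iv h x * x * iv h x = iv h x :=
  (h x).choose_spec.1.2

theorem iv_uniq (h : IsInverseSemigroup S) {x y : S} (h1 : x * y * x = x)
    (h2 : y * x * y = y) : y = iv h x :=
  (h x).choose_spec.2 y ⟨h1, h2⟩

theorem sp1 (h : IsInverseSemigroup S) (x : S) : x * (iv h x * x) = x := by
  rw [← mul_assoc]; exact iv_spec1 h x

theorem sp2 (h : IsInverseSemigroup S) (x : S) : iv h x * (x * iv h x) = iv h x := by
  rw [← mul_assoc]; exact iv_spec2 h x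

theorem c1 (h : IsInverseSemigroup S) (x R : S) : x * (iv h x * (x * R)) = x * R := by
  rw [← mul_assoc, ← mul_assoc, iv_spec1 h x]

theorem c2 (h : IsInverseSemigroup S) (x R : S) :
    iv h x * (x * (iv h x * R)) = iv h x * R := by
  rw [← mul_assoc, ← mul_assoc, iv_spec2 h x]

theorem iv_idem (h : IsInverseSemigroup S) {e : S} (he : e * e = e) : iv h e = e := by
  have h1 : e * e * e = e := by rw [he, he]
  exact (iv_uniq h h1 h1).symm

theorem inv_inv (h : IsInverseSemigroup S) (x : S) : iv h (iv h x) = x :=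
  (iv_uniq h (iv_spec2 h x) (iv_spec1 h x)).symm

theorem idem_rr (h : IsInverseSemigroup S) (x : S) :
    (x * iv h x) * (x * iv h x) = x * iv h x := by
  calc (x * iv h x) * (x * iv h x) = x * (iv h x * (x * iv h x)) := by
        simp only [mul_assoc]
    _ = x * iv h x := by rw [sp2 h]

theorem idem_ll (h : IsInverseSemigroup S) (x : S) :
    (iv h x * x) * (iv h x * x) = iv h x * x := by
  calc (iv h x * x) * (iv h x * x) = iv h x * (x * (iv h x * x)) := by
        simp only [mul_assoc]
    _ = iv h x * x := by rw [c2 h]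

/-! ### Idempotents form a commutative subsemigroup -/

theorem mul_idem (h : IsInverseSemigroup S) {e f : S} (he : e * e = e) (hf : f * f = f) :
    (e * f) * (e * f) = e * f := by
  have A2 : iv h (e * f) * (e * f) * iv h (e * f) = iv h (e * f) := iv_spec2 h (e * f)
  set a := iv h (e * f) with ha
  have A2e : ∀ X : S, a * (e * (f * (a * X))) = a * X := by
    intro X
    have := congrArg (· * X) A2
    simpa only [mul_assoc] using this
  have B1 : (e * f) * (f * (a * e)) * (e * f) = e * f := by
    calc (e * f) * (f * (a * e)) * (e * f)
        = e * (f * (f * (a * (e * (e * f))))) := by simp only [mul_assoc]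
      _ = e * (f * (a * (e * (e * f)))) := by rw [cl hf]
      _ = e * (f * (a * (e * f))) := by rw [cl he]
      _ = (e * f) * a * (e * f) := by simp only [mul_assoc]
      _ = e * f := iv_spec1 h (e * f)
  have B2 : (f * (a * e)) * (e * f) * (f * (a * e)) = f * (a * e) := by
    calc (f * (a * e)) * (e * f) * (f * (a * e))
        = f * (a * (e * (e * (f * (f * (a * e)))))) := by simp only [mul_assoc]
      _ = f * (a * (e * (f * (f * (a * e))))) := by rw [cl he]
      _ = f * (a * (e * (f * (a * e)))) := by rw [cl hf]
      _ = f * (a * e) := by rw [A2e]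
  have hb : f * (a * e) = a := (iv_uniq h B1 B2).symm ▸ rfl
  have hb' : f * (a * e) = a := by rw [ha]; exact iv_uniq h B1 B2
  have hbidem : (f * (a * e)) * (f * (a * e)) = f * (a * e) := by
    calc (f * (a * e)) * (f * (a * e))
        = f * (a * (e * (f * (a * e)))) := by simp only [mul_assoc]
      _ = f * (a * e) := by rw [A2e]
  have haa : a * a = a := by rw [← hb']; exact hbidem
  have hefa : e * f = a := by
    calc e * f = iv h (iv h (e * f)) := (inv_inv h (e * f)).symm
      _ = iv h a := by rw [← ha]
      _ = a := iv_idem h haa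
  rw [hefa]; exact haa

theorem idem_comm (h : IsInverseSemigroup S) {e f : S} (he : e * e = e) (hf : f * f = f) :
    e * f = f * e := by
  have hef := mul_idem h he hf
  have hfe := mul_idem h hf he
  have B1 : (e * f) * (f * e) * (e * f) = e * f := by
    calc (e * f) * (f * e) * (e * f)
        = e * (f * (f * (e * (e * f)))) := by simp only [mul_assoc]
      _ = e * (f * (e * (e * f))) := by rw [cl hf]
      _ = e * (f * (e * f)) := by rw [cl he]
      _ = (e * f) * (e * f) := by simp only [mul_assoc]
      _ = e * f := hef
  have B2 : (f * e) * (e * f) * (f * e) = f * e := by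
    calc (f * e) * (e * f) * (f * e)
        = f * (e * (e * (f * (f * e)))) := by simp only [mul_assoc]
      _ = f * (e * (f * (f * e))) := by rw [cl he]
      _ = f * (e * (f * e)) := by rw [cl hf]
      _ = (f * e) * (f * e) := by simp only [mul_assoc]
      _ = f * e := hfe
  have h1 : f * e = iv h (e * f) := iv_uniq h B1 B2
  have h2 : iv h (e * f) = e * f := iv_idem h hef
  exact (h1.trans h2).symm

theorem inv_mul (h : IsInverseSemigroup S) (x y : S) :
    iv h (x * y) = iv h y * iv h x := by
  have hyy := idem_rr h y
  have hxx := idem_ll h x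
  have hc : (y * iv h y) * (iv h x * x) = (iv h x * x) * (y * iv h y) :=
    idem_comm h hyy hxx
  set x' := iv h x
  set y' := iv h y
  have B1 : (x * y) * (y' * x') * (x * y) = x * y := by
    calc (x * y) * (y' * x') * (x * y)
        = x * ((y * y') * ((x' * x) * y)) := by simp only [mul_assoc]
      _ = x * (((y * y') * (x' * x)) * y) := by rw [← mul_assoc (y * y')]
      _ = x * (((x' * x) * (y * y')) * y) := by rw [hc]
      _ = x * (x' * (x * (y * (y' * y)))) := by simp only [mul_assoc]
      _ = x * (y * (y' * y)) := by rw [c1 h]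
      _ = x * y := by rw [sp1 h]
  have B2 : (y' * x') * (x * y) * (y' * x') = y' * x' := by
    calc (y' * x') * (x * y) * (y' * x')
        = y' * ((x' * x) * ((y * y') * x')) := by simp only [mul_assoc]
      _ = y' * (((x' * x) * (y * y')) * x') := by rw [← mul_assoc (x' * x)]
      _ = y' * (((y * y') * (x' * x)) * x') := by rw [← hc]
      _ = y' * (y * (y' * (x' * (x * x')))) := by simp only [mul_assoc]
      _ = y' * (x' * (x * x')) := by rw [c2 h]
      _ = y' * x' := by rw [sp2 h]
  exact (iv_uniq h B1 B2).symm

/-! ### Lemma A : equality criterion -/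

theorem lemA (h : IsInverseSemigroup S) {s t : S}
    (hst : (s * iv h t) * (s * iv h t) = s * iv h t)
    (hd : iv h s * s = iv h t * t) : s = t := by
  have h1 : t * iv h s = s * iv h t := by
    have e1 : iv h (s * iv h t) = s * iv h t := iv_idem h hst
    have e2 : iv h (s * iv h t) = iv h (iv h t) * iv h s := inv_mul h s (iv h t)
    rw [inv_inv h] at e2
    exact e2.symm.trans e1
  have hs : s = (s * iv h t) * t := by
    calc s = s * (iv h s * s) := (sp1 h s).symm
      _ = s * (iv h t * t) := by rw [hd]
      _ = (s * iv h t) * t := by rw [mul_assoc]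
  have ht : t = (s * iv h t) * s := by
    calc t = t * (iv h t * t) := (sp1 h t).symm
      _ = t * (iv h s * s) := by rw [← hd]
      _ = (t * iv h s) * s := by rw [mul_assoc]
      _ = (s * iv h t) * s := by rw [h1]
  calc s = (s * iv h t) * t := hs
    _ = (s * iv h t) * ((s * iv h t) * s) := by rw [← ht]
    _ = ((s * iv h t) * (s * iv h t)) * s := by simp only [mul_assoc]
    _ = (s * iv h t) * s := by rw [hst]
    _ = t := ht.symm

/-! ### Prefix lemma -/

theorem prefix_le (h : IsInverseSemigroup S) (x y : S) :
    ((x * y) * iv h (x * y)) * (x * iv h x) = (x * y) * iv h (x * y) := by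
  rw [inv_mul h x y]
  have hyy := idem_rr h y
  have hxx := idem_ll h x
  have hc : (y * iv h y) * (iv h x * x) = (iv h x * x) * (y * iv h y) :=
    idem_comm h hyy hxx
  set x' := iv h x
  set y' := iv h y
  calc ((x * y) * (y' * x')) * (x * x')
      = x * ((y * y') * ((x' * x) * x')) := by simp only [mul_assoc]
    _ = x * (((y * y') * (x' * x)) * x') := by rw [← mul_assoc (y * y')]
    _ = x * (((x' * x) * (y * y')) * x') := by rw [hc]
    _ = x * (x' * (x * (y * (y' * x')))) := by simp only [mul_assoc]
    _ = x * (y * (y' * x')) := by rw [c1 h]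
    _ = (x * y) * (y' * x') := by simp only [mul_assoc]

/-! ### The step lemma (heart of the induction) -/

theorem step (h : IsInverseSemigroup S) {e s t k : S} (he : e * e = e) (hk : k * k = k)
    (het : e * (t * (k * iv h t)) = e) (hes : e * (s * iv h s) = e)
    (hins : ∀ c : S, (c * t) * (c * t) = c * t → (c * s) * (c * s) = c * s) :
    e * (s * (k * iv h s)) = e := by
  set t' := iv h t with ht'def
  set s' := iv h s with hs'def
  have ett : e * (t * t') = e := by
    conv_lhs => rw [← het]
    calc (e * (t * (k * t'))) * (t * t')
        = e * (t * (k * (t' * (t * t')))) := by simp only [mul_assoc]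
      _ = e * (t * (k * t')) := by rw [sp2 h]
      _ = e := het
  have heq : e * (t * (t' * e)) = e := by
    calc e * (t * (t' * e)) = (e * (t * t')) * e := by simp only [mul_assoc]
      _ = e * e := by rw [ett]
      _ = e := he
  have hbtt : (t * t') * (t * t') = t * t' := idem_rr h t
  have hbss : (s * s') * (s * s') = s * s' := idem_rr h s
  have hce : e * (t * t') = (t * t') * e := idem_comm h he hbtt
  have hcse : e * (s * s') = (s * s') * e := idem_comm h he hbss
  -- z := t' * (e * s) is idempotent, via the inseparability hypothesis
  have hzt : ((t' * e) * t) * ((t' * e) * t) = (t' * e) * t := by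
    calc ((t' * e) * t) * ((t' * e) * t)
        = t' * ((e * (t * t')) * (e * t)) := by simp only [mul_assoc]
      _ = t' * (((t * t') * e) * (e * t)) := by rw [hce]
      _ = t' * (t * (t' * (e * (e * t)))) := by simp only [mul_assoc]
      _ = t' * (t * (t' * (e * t))) := by rw [cl he]
      _ = t' * (e * t) := by rw [c2 h]
      _ = (t' * e) * t := by rw [← mul_assoc]
  have hz0 : ((t' * e) * s) * ((t' * e) * s) = (t' * e) * s := hins (t' * e) hzt
  have hz : (t' * (e * s)) * (t' * (e * s)) = t' * (e * s) := by
    rw [← mul_assoc t' e s]; exact hz0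
  -- g := s' * (e * s) is idempotent
  have hg : (s' * (e * s)) * (s' * (e * s)) = s' * (e * s) := by
    calc (s' * (e * s)) * (s' * (e * s))
        = s' * ((e * (s * s')) * (e * s)) := by simp only [mul_assoc]
      _ = s' * (((s * s') * e) * (e * s)) := by rw [hcse]
      _ = s' * (s * (s' * (e * (e * s)))) := by simp only [mul_assoc]
      _ = s' * (s * (s' * (e * s))) := by rw [cl he]
      _ = s' * (e * s) := by rw [c2 h]
  have hczk : (t' * (e * s)) * k = k * (t' * (e * s)) := idem_comm h hz hk
  have hgk : (s' * (e * s)) * k = k * (s' * (e * s)) := idem_comm h hg hk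
  have hzz' : (t' * (e * s)) * ((s' * (e * t)) * (t' * e)) =
      (t' * (e * t)) * (t' * e) := by
    calc (t' * (e * s)) * ((s' * (e * t)) * (t' * e))
        = t' * ((e * (s * s')) * ((e * t) * (t' * e))) := by simp only [mul_assoc]
      _ = t' * (e * ((e * t) * (t' * e))) := by rw [hes]
      _ = t' * (e * (t * (t' * e))) := by
          rw [show e * ((e * t) * (t' * e)) = e * (e * (t * (t' * e))) by
            simp only [mul_assoc], cl he]
      _ = (t' * (e * t)) * (t' * e) := by simp only [mul_assoc]
  have hXe : e * (s * (k * (s' * e))) = e := by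
    calc e * (s * (k * (s' * e)))
        = (e * e) * (s * (k * (s' * (e * e)))) := by rw [he]
      _ = ((e * (t * t')) * e) * (s * (k * (s' * ((e * (t * t')) * e)))) := by rw [ett]
      _ = (e * t) * ((t' * (e * s)) * (k * ((s' * (e * t)) * (t' * e)))) := by
          simp only [mul_assoc]
      _ = (e * t) * (((t' * (e * s)) * k) * ((s' * (e * t)) * (t' * e))) := by
          rw [← mul_assoc (t' * (e * s))]
      _ = (e * t) * ((k * (t' * (e * s))) * ((s' * (e * t)) * (t' * e))) := by
          rw [hczk]
      _ = (e * t) * (k * ((t' * (e * s)) * ((s' * (e * t)) * (t' * e)))) := by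
          rw [mul_assoc k]
      _ = (e * t) * (k * ((t' * (e * t)) * (t' * e))) := by rw [hzz']
      _ = (e * (t * (k * t'))) * (e * (t * (t' * e))) := by simp only [mul_assoc]
      _ = e * (e * (t * (t' * e))) := by rw [het]
      _ = e * e := by rw [heq]
      _ = e := he
  have hA : (e * (s * (k * s'))) * (e * (s * (k * s'))) = e * (s * (k * s')) := by
    calc (e * (s * (k * s'))) * (e * (s * (k * s')))
        = e * (s * (k * ((s' * (e * s)) * (k * s')))) := by simp only [mul_assoc]
      _ = e * (s * ((k * (s' * (e * s))) * (k * s'))) := by rw [← mul_assoc k]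
      _ = e * (s * (((s' * (e * s)) * k) * (k * s'))) := by rw [← hgk]
      _ = e * (s * ((s' * (e * s)) * (k * (k * s')))) := by rw [mul_assoc]
      _ = e * (s * ((s' * (e * s)) * (k * s'))) := by rw [cl hk]
      _ = (e * (s * s')) * (e * (s * (k * s'))) := by simp only [mul_assoc]
      _ = e * (e * (s * (k * s'))) := by rw [hes]
      _ = e * (s * (k * s')) := by rw [cl he]
  have hB : (e * (s * (k * s'))) * (e * (s * (k * s'))) = e := by
    calc (e * (s * (k * s'))) * (e * (s * (k * s')))
        = e * (s * (k * ((s' * (e * s)) * (k * s')))) := by simp only [mul_assoc]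
      _ = e * (s * (k * (k * ((s' * (e * s)) * s')))) := by rw [sw hgk]
      _ = e * (s * (k * ((s' * (e * s)) * s'))) := by rw [cl hk]
      _ = e * (s * (k * (s' * (e * (s * s'))))) := by simp only [mul_assoc]
      _ = e * (s * (k * (s' * e))) := by rw [hes]
      _ = e := hXe
  exact hA.symm.trans hB

end InvSgpProof

namespace InvSgpProof

/-! ### Words, prefixes, and pair sets -/

variable {α : Type} {β : Type}

/-- Extend a word on the right by a list of letters. -/
def appL : FreeSemigroup α → List α → FreeSemigroup α
  | p, [] => p
  | p, c :: l => appL (p * .of c) l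

theorem appL_struct : ∀ (t : List α) (p : FreeSemigroup α),
    appL p t = ⟨p.head, p.tail ++ t⟩ := by
  intro t
  induction t with
  | nil => intro p; simp [appL]
  | cons c t' ih =>
      intro p
      show appL (p * .of c) t' = _
      rw [ih (p * .of c)]
      simp [FreeSemigroup.head_mul, FreeSemigroup.tail_mul, FreeSemigroup.of]

theorem word_eq (u : FreeSemigroup α) : u = appL (.of u.head) u.tail := by
  rw [appL_struct]
  rfl

theorem appL_cases : ∀ (l : List α) (p : FreeSemigroup α),
    appL p l = p ∨ ∃ w, appL p l = p * w := by
  intro l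
  induction l with
  | nil => intro p; exact Or.inl rfl
  | cons c l ih =>
      intro p
      rcases ih (p * .of c) with h1 | ⟨w, hw⟩
      · exact Or.inr ⟨.of c, h1⟩
      · exact Or.inr ⟨.of c * w, by rw [show appL p (c :: l) = appL (p * .of c) l from rfl,
          hw, mul_assoc]⟩

theorem head_decomp (u : FreeSemigroup α) :
    u = .of u.head ∨ ∃ r, u = .of u.head * r := by
  obtain ⟨a, t⟩ := u
  cases t with
  | nil => exact Or.inl rfl
  | cons c t' => exact Or.inr ⟨⟨c, t'⟩, rfl⟩

/-- The set of (letter, class of preceding prefix) pairs of a word. -/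
def pSet (σ : FreeSemigroup α → β) (u : FreeSemigroup α) : Set (α × Option β) :=
  {x | (x.2 = none ∧ u.head = x.1) ∨
    ∃ p, x.2 = some (σ p) ∧ (u = p * .of x.1 ∨ ∃ r, u = p * .of x.1 * r)}

/-- All traversal pairs of `(p, l)` belong to `T`. -/
def POK (σ : FreeSemigroup α → β) (T : Set (α × Option β)) :
    FreeSemigroup α → List α → Prop
  | _, [] => True
  | p, c :: l => ((c, some (σ p)) ∈ T) ∧ POK σ T (p * .of c) l

theorem pok_mono {σ : FreeSemigroup α → β} {T T' : Set (α × Option β)} (hTT : T ⊆ T') :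
    ∀ (l : List α) (p : FreeSemigroup α), POK σ T p l → POK σ T' p l := by
  intro l
  induction l with
  | nil => intro p _; trivial
  | cons c l ih => intro p hp; exact ⟨hTT hp.1, ih _ hp.2⟩

theorem pok_self (σ : FreeSemigroup α → β) :
    ∀ (l : List α) (p : FreeSemigroup α), POK σ (pSet σ (appL p l)) p l := by
  intro l
  induction l with
  | nil => intro p; trivial
  | cons c l ih =>
      intro p
      constructor
      · rcases appL_cases l (p * .of c) with h1 | ⟨w, hw⟩
        · exact Or.inr ⟨p, rfl, Or.inl h1⟩
        · exact Or.inr ⟨p, rfl, Or.inr ⟨w, hw⟩⟩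
      · exact ih (p * .of c)

end InvSgpProof

namespace InvSgpProof

variable {α : Type} {I : Type} [Semigroup I]

/-! ### The main induction -/

theorem aux (h : IsInverseSemigroup I) (π : FreeSemigroup α →ₙ* I)
    (hsurj : Function.Surjective π) {L : Set (FreeSemigroup α)}
    (hmem : ∀ w, w ∈ L ↔ π w * π w = π w) {β : Type}
    (σ : FreeSemigroup α → β)
    (hσ : ∀ p p' : FreeSemigroup α, σ p = σ p' → ∀ x, x * p ∈ L ↔ x * p' ∈ L)
    (u : FreeSemigroup α) (he : π u * π u = π u) :
    ∀ (l : List α) (p : FreeSemigroup α), POK σ (pSet σ u) p l →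
      π u * (π p * iv h (π p)) = π u →
      π u * (π (appL p l) * iv h (π (appL p l))) = π u := by
  intro l
  induction l with
  | nil => intro p _ hp; exact hp
  | cons c l ih =>
      intro p hpok hp
      obtain ⟨hmem1, hrest⟩ := hpok
      rcases hmem1 with ⟨hnone, _⟩ | ⟨p', hq, hdec⟩
      · exact absurd hnone (by simp)
      · have hqq : σ p = σ p' := by simpa using hq
        have hpre : π u * (π (p' * .of c) * iv h (π (p' * .of c))) = π u := by
          rcases hdec with hdec | ⟨r, hdec⟩
          · rw [← hdec, iv_idem h he, cl he, he]
          · have hthis := prefix_le h (π (p' * .of c)) (π r)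
            rw [← map_mul, ← hdec, iv_idem h he, he] at hthis
            exact hthis
        set κ := π (FreeSemigroup.of c) with hκdef
        have hk : (κ * iv h κ) * (κ * iv h κ) = κ * iv h κ := idem_rr h κ
        have het : π u * (π p' * ((κ * iv h κ) * iv h (π p'))) = π u := by
          calc π u * (π p' * ((κ * iv h κ) * iv h (π p')))
              = π u * (π (p' * .of c) * iv h (π (p' * .of c))) := by
                rw [map_mul, inv_mul h]; simp only [mul_assoc, hκdef]
            _ = π u := hpre
        have hins : ∀ cc : I, (cc * π p') * (cc * π p') = cc * π p' →
            (cc * π p) * (cc * π p) = cc * π p := by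
          intro cc hcc
          obtain ⟨x, hx⟩ := hsurj cc
          rw [← hx, ← map_mul] at hcc ⊢
          rw [← hmem] at hcc ⊢
          exact (hσ p p' hqq x).mpr hcc
        have hstep := step h he hk het hp hins
        have hnext : π u * (π (p * .of c) * iv h (π (p * .of c))) = π u := by
          calc π u * (π (p * .of c) * iv h (π (p * .of c)))
              = π u * (π p * ((κ * iv h κ) * iv h (π p))) := by
                rw [map_mul, inv_mul h]; simp only [mul_assoc, hκdef]
            _ = π u := hstep
        exact ih (p * .of c) hrest hnext

theorem main_le (h : IsInverseSemigroup I) (π : FreeSemigroup α →ₙ* I)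
    (hsurj : Function.Surjective π) {L : Set (FreeSemigroup α)}
    (hmem : ∀ w, w ∈ L ↔ π w * π w = π w) {β : Type}
    (σ : FreeSemigroup α → β)
    (hσ : ∀ p p' : FreeSemigroup α, σ p = σ p' → ∀ x, x * p ∈ L ↔ x * p' ∈ L)
    (u v : FreeSemigroup α) (he : π u * π u = π u)
    (hsub : pSet σ v ⊆ pSet σ u) :
    π u * (π v * iv h (π v)) = π u := by
  have hpok : POK σ (pSet σ u) (.of v.head) v.tail := by
    apply pok_mono hsub
    have := pok_self σ v.tail (.of v.head)
    rwa [← word_eq v] at this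
  have hhead : (v.head, (none : Option β)) ∈ pSet σ u := hsub (Or.inl ⟨rfl, rfl⟩)
  have base : π u * (π (.of v.head) * iv h (π (.of v.head))) = π u := by
    rcases hhead with ⟨_, hh⟩ | ⟨p, hq, _⟩
    · rcases head_decomp u with hu1 | ⟨r, hu1⟩
      · rw [hh] at hu1
        rw [← hu1, iv_idem h he, cl he, he]
      · rw [hh] at hu1
        have hthis := prefix_le h (π (.of v.head)) (π r)
        rw [← map_mul, ← hu1, iv_idem h he, he] at hthis
        exact hthis
    · exact absurd hq (by simp)
  have := aux h π hsurj hmem σ hσ u he v.tail (.of v.head) hpok base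
  rwa [← word_eq v] at this

theorem idem_inj (h : IsInverseSemigroup I) (π : FreeSemigroup α →ₙ* I)
    (hsurj : Function.Surjective π) {L : Set (FreeSemigroup α)}
    (hmem : ∀ w, w ∈ L ↔ π w * π w = π w) {β : Type}
    (σ : FreeSemigroup α → β)
    (hσ : ∀ p p' : FreeSemigroup α, σ p = σ p' → ∀ x, x * p ∈ L ↔ x * p' ∈ L)
    (u v : FreeSemigroup α) (hu : π u * π u = π u) (hv : π v * π v = π v)
    (huv : pSet σ u = pSet σ v) : π u = π v := by
  have h1 : π u * π v = π u := by
    have := main_le h π hsurj hmem σ hσ u v hu (huv.ge)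
    rwa [iv_idem h hv, hv] at this
  have h2 : π v * π u = π v := by
    have := main_le h π hsurj hmem σ hσ v u hv (huv.le)
    rwa [iv_idem h hu, hu] at this
  calc π u = π u * π v := h1.symm
    _ = π v * π u := idem_comm h hu hv
    _ = π v := h2

end InvSgpProof

open InvSgpProof

theorem finitely_many_inverse_semigroups_with_given_idempotent_problem
    {α : Type} [Finite α] (L : Set (FreeSemigroup α))
    (hreg : Finite (Quotient (synSetoid L))) :
    ∃ S : Set ((n : ℕ) × (Fin n → Fin n → Fin n)), S.Finite ∧
      ∀ (I : Type) (_ : Semigroup I), IsInverseSemigroup I →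
        ∀ π : FreeSemigroup α →ₙ* I, Function.Surjective π →
          idemLang π = L →
          ∃ p ∈ S, ∃ φ : I ≃ Fin p.1,
            ∀ a b : I, φ (a * b) = p.2 (φ a) (φ b) := by
  classical
  haveI := hreg
  set Q := Quotient (synSetoid L) with hQ
  haveI : Finite Q := hreg
  haveI := Fintype.ofFinite Q
  haveI := Fintype.ofFinite α
  set N := Nat.card (Q × Set (α × Option Q)) with hN
  refine ⟨{p | p.1 ≤ N}, ?_, ?_⟩
  · -- finiteness of the set of tables
    have hsub : {p : (n : ℕ) × (Fin n → Fin n → Fin n) | p.1 ≤ N} ⊆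
        ⋃ n ∈ Set.Iic N, Sigma.mk n '' (Set.univ) := by
      intro p hp
      simp only [Set.mem_iUnion, Set.mem_image, Set.mem_univ, Set.mem_Iic]
      exact ⟨p.1, hp, p.2, trivial, rfl⟩
    exact Set.Finite.subset
      (Set.Finite.biUnion (Set.finite_Iic N) (fun n _ => Set.finite_univ.image _)) hsub
  · intro I instI hInv π hsurj hL
    have h := hInv
    have hmem : ∀ w, w ∈ L ↔ π w * π w = π w := by
      intro w; rw [← hL]; exact Iff.rfl
    set σ : FreeSemigroup α → Q := Quotient.mk (synSetoid L) with hσdef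
    have hσ : ∀ p p' : FreeSemigroup α, σ p = σ p' → ∀ x, x * p ∈ L ↔ x * p' ∈ L := by
      intro p p' hpp x
      exact (Quotient.exact hpp).2.1 x
    -- choice of representing words
    have hwr : ∀ s : I, π ((hsurj s).choose) = s := fun s => (hsurj s).choose_spec
    set wr : I → FreeSemigroup α := fun s => (hsurj s).choose with hwrdef
    -- the injection
    set Φ : I → Q × Set (α × Option Q) :=
      fun s => (σ (wr s), pSet σ (wr (iv h s * s))) with hΦdef
    have hΦinj : Function.Injective Φ := by
      intro s t hst
      have h1 : σ (wr s) = σ (wr t) := congrArg Prod.fst hst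
      have h2 : pSet σ (wr (iv h s * s)) = pSet σ (wr (iv h t * t)) :=
        congrArg Prod.snd hst
      have hies : π (wr (iv h s * s)) * π (wr (iv h s * s)) = π (wr (iv h s * s)) := by
        rw [hwr]; exact idem_ll h s
      have hiet : π (wr (iv h t * t)) * π (wr (iv h t * t)) = π (wr (iv h t * t)) := by
        rw [hwr]; exact idem_ll h t
      have hdom : iv h s * s = iv h t * t := by
        have := idem_inj h π hsurj hmem σ hσ _ _ hies hiet h2
        rwa [hwr, hwr] at this
      have hsyn : SynEq L (wr s) (wr t) := Quotient.exact h1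
      have hwit : (s * iv h t) * (s * iv h t) = s * iv h t := by
        have hmem1 : wr t * wr (iv h t) ∈ L := by
          rw [hmem, map_mul, hwr, hwr]
          exact idem_rr h t
        have hmem2 : wr s * wr (iv h t) ∈ L := (hsyn.2.2.1 (wr (iv h t))).mpr hmem1
        have := (hmem _).mp hmem2
        rwa [map_mul, hwr, hwr] at this
      exact lemA h hwit hdom
    haveI : Finite I := Finite.of_injective Φ hΦinj
    have hcard : Nat.card I ≤ N := Nat.card_le_card_of_injective Φ hΦinj
    set φ := Finite.equivFin I with hφdef
    refine ⟨⟨Nat.card I, fun i j => φ (φ.symm i * φ.symm j)⟩, hcard, φ, ?_⟩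
    intro a b
    simp
end
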